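/- arXiv:0803.4082 — 6 statements merged into one kernel-verified Lean document; each statement's English description precedes it below -/
import Mathlib

section
/- Let G be a profinite group. Then the underlying profinite space of G is an injective object in the category Profinite: for every injective continuous map i : X → Y between profinite spaces and every continuous map f : X → G, there exists a continuous map g : Y → G with g ∘ i = f. -/
universe u

open Set Function Pointwise

set_option linter.unusedSectionVars false
set_option maxHeartbeats 1000000

section Helpers

variable {Y : Type*} [TopologicalSpace Y] [CompactSpace Y] [T2Space Y]
  [TotallyDisconnectedSpace Y]

lemma aux_clopen_sep {K L : Set Y} (hK : IsCompact K) (hL : IsClosed L)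
    (hKL : Disjoint K L) : ∃ U : Set Y, IsClopen U ∧ K ⊆ U ∧ Disjoint U L := by
  have hsub : ∀ x : K, (x : Y) ∈ Lᶜ := fun x => fun hx =>
    (hKL.le_bot ⟨x.2, hx⟩ : False)
  choose V hVclopen hVmem hVsub using fun x : K =>
    compact_exists_isClopen_in_isOpen (hL.isOpen_compl) (hsub x)
  obtain ⟨t, ht⟩ := hK.elim_finite_subcover V (fun x => (hVclopen x).2)
    (fun y hy => mem_iUnion.2 ⟨⟨y, hy⟩, hVmem ⟨y, hy⟩⟩)
  refine ⟨⋃ x ∈ t, V x, t.finite_toSet.isClopen_biUnion (fun x _ => hVclopen x), ht, ?_⟩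
  rw [disjoint_left]
  rintro y hy hyL
  obtain ⟨x, -, hx⟩ := mem_iUnion₂.1 hy
  exact hVsub x hx hyL

lemma aux_disjointify {ι : Type*} [Finite ι] {β : Type*} [TopologicalSpace β]
    (U : ι → Set β) (hU : ∀ k, IsClopen (U k)) :
    ∃ V : ι → Set β, (∀ k, IsClopen (V k)) ∧ (∀ k, V k ⊆ U k) ∧
      Pairwise (Function.onFun Disjoint V) ∧ (⋃ k, V k) = ⋃ k, U k := by
  classical
  cases isEmpty_or_nonempty ι
  · exact ⟨U, hU, fun k => le_rfl, fun k => (IsEmpty.false k).elim,  rfl⟩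
  have : Fintype ι := Fintype.ofFinite ι
  set e := Fintype.equivFin ι with he
  refine ⟨fun k => U k \ ⋃ j ∈ {j | e j < e k}, U j, fun k => (hU k).diff
    ((toFinite _).isClopen_biUnion (fun j _ => hU j)), fun k => diff_subset, ?_, ?_⟩
  · intro a b hab
    rcases lt_or_gt_of_ne (fun h : e a = e b => hab (e.injective h)) with h | h
    · refine Disjoint.mono_left diff_subset ?_
      rw [disjoint_left]
      rintro y hy ⟨hy1, hy2⟩
      exact hy2 (mem_biUnion h hy)
    · refine Disjoint.mono_right diff_subset ?_
      rw [disjoint_right]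
      rintro y hy ⟨hy1, hy2⟩
      exact hy2 (mem_biUnion h hy)
  · refine subset_antisymm (iUnion_mono fun k => diff_subset) ?_
    intro y hy
    rw [mem_iUnion] at hy ⊢
    obtain ⟨k0, hk0⟩ := hy
    have hne : (Finset.univ.filter (fun k => y ∈ U k)).Nonempty :=
      ⟨k0, by simp [hk0]⟩
    obtain ⟨k, hk, hmin⟩ := Finset.exists_min_image _ e hne
    simp only [Finset.mem_filter] at hk
    refine ⟨k, hk.2, ?_⟩
    intro hmem
    obtain ⟨j, hj, hjy⟩ := mem_iUnion₂.1 hmem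
    have := hmin j (by simp [hjy])
    exact absurd this (not_le.2 hj)

lemma aux_partition {ι : Type*} [Finite ι] [Nonempty ι] (K : ι → Set Y)
    (hK : ∀ k, IsClosed (K k)) (hd : Pairwise (Function.onFun Disjoint K)) :
    ∃ V : ι → Set Y, (∀ k, IsClopen (V k)) ∧ (∀ k, K k ⊆ V k) ∧
      Pairwise (Function.onFun Disjoint V) ∧ (⋃ k, V k) = univ := by
  have hstep : ∀ k, ∃ U : Set Y, IsClopen U ∧ K k ⊆ U ∧
      Disjoint U (⋃ j ∈ {j | j ≠ k}, K j) := by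
    intro k
    refine aux_clopen_sep (hK k).isCompact ((toFinite _).isClosed_biUnion fun j _ => hK j) ?_
    rw [disjoint_iUnion₂_right]
    exact fun j hj => (hd (Ne.symm hj)).mono_left le_rfl
  choose U hUclopen hKU hUdis using hstep
  obtain ⟨V, hVclopen, hVU, hVdis, hVeq⟩ := aux_disjointify U hUclopen
  have hKV : ∀ k, K k ⊆ V k := by
    intro k y hy
    have : y ∈ ⋃ j, V j := by
      rw [hVeq]; exact mem_iUnion.2 ⟨k, hKU k hy⟩
    obtain ⟨j, hj⟩ := mem_iUnion.1 this
    rcases eq_or_ne j k with rfl | hne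
    · exact hj
    · exact absurd hy (fun hy' => (hUdis j).le_bot ⟨hVU j hj, mem_biUnion hne.symm hy'⟩)
  classical
  set k₀ : ι := Classical.arbitrary ι
  have hUnion : IsClopen (⋃ k, V k) := isClopen_iUnion_of_finite hVclopen
  refine ⟨fun k => if k = k₀ then V k ∪ (⋃ l, V l)ᶜ else V k, ?_, ?_, ?_, ?_⟩
  · intro k
    by_cases h : k = k₀ <;> simp only [h, if_pos, if_neg, if_true, if_false]
    · exact (hVclopen k₀).union hUnion.compl
    · exact hVclopen k
  · intro k
    by_cases h : k = k₀ <;> simp only [h, if_pos, if_neg, if_true, if_false]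
    · exact (hKV k₀).trans subset_union_left
    · exact hKV k
  · intro a b hab
    have hcomp : ∀ c, Disjoint (V c) (⋃ l, V l)ᶜ := fun c =>
      disjoint_compl_right.mono_left (subset_iUnion V c)
    rw [Function.onFun]
    split_ifs with h1 h2
    · exact absurd (h1.trans h2.symm) hab
    · exact disjoint_union_left.2 ⟨hVdis hab, (hcomp b).symm⟩
    · exact disjoint_union_right.2 ⟨hVdis hab, hcomp a⟩
    · exact hVdis hab
  · apply eq_univ_of_forall
    intro y
    rw [mem_iUnion]
    by_cases hy : y ∈ ⋃ l, V l
    · obtain ⟨k, hk⟩ := mem_iUnion.1 hy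
      refine ⟨k, ?_⟩
      show y ∈ if k = k₀ then V k ∪ (⋃ l, V l)ᶜ else V k
      by_cases h : k = k₀
      · rw [if_pos h]; exact Or.inl (h ▸ hk)
      · rw [if_neg h]; exact hk
    · refine ⟨k₀, ?_⟩
      show y ∈ if k₀ = k₀ then V k₀ ∪ (⋃ l, V l)ᶜ else V k₀
      simp only [if_pos rfl]
      exact Or.inr hy

end Helpers


section Groups

variable {G : Type u} [Group G] [TopologicalSpace G] [IsTopologicalGroup G]
  [CompactSpace G] [T2Space G] [TotallyDisconnectedSpace G]

lemma aux_totallySeparated_quotient (H : Subgroup G) (hH : IsClosed (H : Set G)) :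
    TotallySeparatedSpace (G ⧸ H) := by
  constructor
  rintro a - b - hab
  obtain ⟨g₁, rfl⟩ := QuotientGroup.mk_surjective a
  obtain ⟨g₂, rfl⟩ := QuotientGroup.mk_surjective b
  have hdis : Disjoint (g₁ • (H : Set G)) (g₂ • (H : Set G)) := by
    rw [disjoint_left]
    rintro x ⟨h₁, hh₁, rfl⟩ ⟨h₂, hh₂, hx⟩
    apply hab
    rw [QuotientGroup.eq]
    have hx' : g₂ * h₂ = g₁ * h₁ := hx
    have : g₁⁻¹ * g₂ = h₁ * h₂⁻¹ := by
      have : g₁⁻¹ * (g₂ * h₂) * h₂⁻¹ = h₁ * h₂⁻¹ := by rw [hx']; group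
      rw [← this]; group
    rw [this]
    exact H.mul_mem hh₁ (H.inv_mem hh₂)
  obtain ⟨U, hUclopen, hU1, hU2⟩ := aux_clopen_sep
    ((hH.isCompact).smul g₁) (hH.smul g₂) hdis
  -- V := complement of Uᶜ * H, a clopen H-saturated set containing g₁H and missing g₂H
  set W : Set G := Uᶜ * (H : Set G) with hW
  have hWopen : IsOpen W := (hUclopen.1.isOpen_compl).mul_right
  have hWclosed : IsClosed W :=
    ((hUclopen.2.isClosed_compl.isCompact).mul hH.isCompact).isClosed
  have hWsat : ∀ (v : G) (h : G), h ∈ H → v ∈ W → v * h ∈ W := by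
    rintro v h hh ⟨w, hw, k, hk, rfl⟩
    exact ⟨w, hw, k * h, H.mul_mem hk hh, (mul_assoc _ _ _).symm⟩
  set V : Set G := Wᶜ with hV
  have hVsat : ∀ (v : G) (h : G), h ∈ H → v ∈ V → v * h ∈ V := by
    intro v h hh hv hmem
    exact hv (by simpa using hWsat (v * h) h⁻¹ (H.inv_mem hh) hmem)
  have hg₁V : g₁ ∈ V := by
    rintro ⟨w, hw, k, hk, hwk⟩
    exact hw (hU1 ⟨k⁻¹, H.inv_mem hk, show g₁ • k⁻¹ = w by rw [smul_eq_mul, ← hwk]; group⟩)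
  have hg₂W : g₂ ∈ W := by
    refine ⟨g₂, fun hg₂U => ?_, 1, H.one_mem, mul_one g₂⟩
    exact (hU2.le_bot ⟨hg₂U, ⟨1, H.one_mem, show g₂ • (1:G) = g₂ from mul_one g₂⟩⟩ : False)
  -- push V to the quotient
  set Q : Set (G ⧸ H) := QuotientGroup.mk '' V with hQ
  have hpre : QuotientGroup.mk ⁻¹' Q = V := by
    apply subset_antisymm
    · rintro v hv
      obtain ⟨v', hv', hvv'⟩ := hv
      rw [QuotientGroup.eq] at hvv'
      have : v = v' * (v'⁻¹ * v) := by group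
      rw [this]
      exact hVsat v' _ hvv' hv'
    · exact subset_preimage_image _ _
  have hQopen : IsOpen Q := QuotientGroup.isOpenMap_coe V hWclosed.isOpen_compl
  have hQclosed : IsClosed Q := by
    rw [← (QuotientGroup.isQuotientMap_mk H).isClosed_preimage, hpre]
    exact hWopen.isClosed_compl
  refine ⟨Q, Qᶜ, hQopen, hQclosed.isOpen_compl, ⟨g₁, hg₁V, rfl⟩, ?_, ?_, disjoint_compl_right⟩
  · intro hmem
    rw [← mem_preimage, hpre] at hmem
    exact hmem hg₂W
  · intro z _
    exact or_not.imp_right fun h => h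


/-- Right translation on the coset space `G ⧸ H'` for `H'` normal. -/
def auxRho (H' : Subgroup G) [H'.Normal] (h : G) : G ⧸ H' → G ⧸ H' :=
  Quotient.map' (· * h) (by
    intro a b hab
    rw [QuotientGroup.leftRel_apply] at hab ⊢
    have : (a * h)⁻¹ * (b * h) = h⁻¹ * (a⁻¹ * b) * h := by group
    rw [this]
    exact Subgroup.Normal.conj_mem' ‹H'.Normal› _ hab h)

lemma auxRho_mk (H' : Subgroup G) [H'.Normal] (h u : G) :
    auxRho H' h (QuotientGroup.mk u) = QuotientGroup.mk (u * h) := rfl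

lemma auxRho_continuous (H' : Subgroup G) [H'.Normal] (h : G) :
    Continuous (auxRho H' h) :=
  Continuous.quotient_map' (continuous_mul_right h) _

set_option linter.unusedSectionVars false

section FiberChar

variable (H' H : Subgroup G) [H'.Normal] [H.Normal] (hle : H' ≤ H)

/-- The canonical projection `G ⧸ H' → G ⧸ H`. -/
noncomputable def auxP : G ⧸ H' → G ⧸ H :=
  QuotientGroup.map H' H (MonoidHom.id G) (fun g hg => hle hg)

lemma auxP_mk (u : G) : auxP H' H hle (QuotientGroup.mk u) = QuotientGroup.mk u := rfl

lemma auxP_continuous : Continuous (auxP H' H hle) := by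
  rw [(QuotientGroup.isQuotientMap_mk H').continuous_iff]
  exact QuotientGroup.continuous_mk.congr (fun u => rfl)

lemma auxP_surjective : Function.Surjective (auxP H' H hle) := fun b => by
  obtain ⟨u, rfl⟩ := QuotientGroup.mk_surjective b
  exact ⟨QuotientGroup.mk u, rfl⟩

/-- distinguished trivial element of `H ⧸ H'.subgroupOf H` -/
noncomputable def auxOne : H ⧸ H'.subgroupOf H := QuotientGroup.mk 1

lemma aux_out_mem (δ : H ⧸ H'.subgroupOf H) (hδ : δ = auxOne H' H) :
    ((δ.out : H) : G) ∈ H' := by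
  have h1 : (QuotientGroup.mk δ.out : H ⧸ H'.subgroupOf H) = QuotientGroup.mk 1 := by
    rw [QuotientGroup.out_eq']; exact hδ
  rw [QuotientGroup.eq] at h1
  have := Subgroup.mem_subgroupOf.mp h1
  simpa using this

lemma aux_fiber_char (z₁ z₂ : G ⧸ H') :
    auxP H' H hle z₁ = auxP H' H hle z₂ ↔
      ∃ δ : H ⧸ H'.subgroupOf H, auxRho H' ((δ.out : H) : G) z₁ = z₂ := by
  obtain ⟨u, rfl⟩ := QuotientGroup.mk_surjective z₁
  obtain ⟨v, rfl⟩ := QuotientGroup.mk_surjective z₂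
  rw [auxP_mk, auxP_mk]
  constructor
  · intro h
    rw [QuotientGroup.eq] at h
    set δ : H ⧸ H'.subgroupOf H := QuotientGroup.mk ⟨u⁻¹ * v, h⟩ with hδ
    refine ⟨δ, ?_⟩
    rw [auxRho_mk, QuotientGroup.eq]
    have h2 : (QuotientGroup.mk δ.out : H ⧸ H'.subgroupOf H)
        = QuotientGroup.mk ⟨u⁻¹ * v, h⟩ := by rw [QuotientGroup.out_eq']
    rw [QuotientGroup.eq] at h2
    have h3 : ((δ.out : H) : G)⁻¹ * (u⁻¹ * v) ∈ H' := by
      simpa using Subgroup.mem_subgroupOf.mp h2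
    have : (u * ((δ.out : H) : G))⁻¹ * v = ((δ.out : H) : G)⁻¹ * (u⁻¹ * v) := by group
    rw [this]; exact h3
  · rintro ⟨δ, hδ⟩
    rw [auxRho_mk, QuotientGroup.eq] at hδ
    rw [QuotientGroup.eq]
    have h1 : ((δ.out : H) : G) ∈ H := (δ.out : H).2
    have h2 : (u * ((δ.out : H) : G))⁻¹ * v ∈ H := hle hδ
    have : u⁻¹ * v = ((δ.out : H) : G) * ((u * ((δ.out : H) : G))⁻¹ * v) := by group
    rw [this]
    exact H.mul_mem h1 h2

lemma aux_rho_one (z : G ⧸ H') (δ : H ⧸ H'.subgroupOf H) (hδ : δ = auxOne H' H) :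
    auxRho H' ((δ.out : H) : G) z = z := by
  obtain ⟨u, rfl⟩ := QuotientGroup.mk_surjective z
  rw [auxRho_mk, QuotientGroup.eq]
  have : (u * ((δ.out : H) : G))⁻¹ * u = ((δ.out : H) : G)⁻¹ := by group
  rw [this]
  exact H'.inv_mem (aux_out_mem H' H δ hδ)

lemma aux_rho_eq_self (z : G ⧸ H') (δ : H ⧸ H'.subgroupOf H)
    (h : auxRho H' ((δ.out : H) : G) z = z) : δ = auxOne H' H := by
  obtain ⟨u, rfl⟩ := QuotientGroup.mk_surjective z
  rw [auxRho_mk, QuotientGroup.eq] at h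
  have hmem : ((δ.out : H) : G) ∈ H' := by
    have heq : (u * ((δ.out : H) : G))⁻¹ * u = ((δ.out : H) : G)⁻¹ := by group
    rw [heq] at h
    simpa using H'.inv_mem h
  have : (QuotientGroup.mk δ.out : H ⧸ H'.subgroupOf H) = QuotientGroup.mk 1 := by
    rw [QuotientGroup.eq]
    refine Subgroup.mem_subgroupOf.mpr ?_
    simpa using H'.inv_mem hmem
  rw [QuotientGroup.out_eq'] at this
  exact this

lemma aux_rho_inj (z : G ⧸ H') (δ δ' : H ⧸ H'.subgroupOf H)
    (h : auxRho H' ((δ.out : H) : G) z = auxRho H' ((δ'.out : H) : G) z) : δ = δ' := by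
  obtain ⟨u, rfl⟩ := QuotientGroup.mk_surjective z
  rw [auxRho_mk, auxRho_mk, QuotientGroup.eq] at h
  have hmem : ((δ.out : H) : G)⁻¹ * ((δ'.out : H) : G) ∈ H' := by
    have : (u * ((δ.out : H) : G))⁻¹ * (u * ((δ'.out : H) : G))
        = ((δ.out : H) : G)⁻¹ * ((δ'.out : H) : G) := by group
    rwa [this] at h
  have : (QuotientGroup.mk δ.out : H ⧸ H'.subgroupOf H) = QuotientGroup.mk δ'.out := by
    rw [QuotientGroup.eq]
    exact Subgroup.mem_subgroupOf.mpr (by simpa using hmem)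
  rwa [QuotientGroup.out_eq', QuotientGroup.out_eq'] at this

end FiberChar

section SectionLemma

variable (H' H : Subgroup G) [H'.Normal] [H.Normal]

lemma aux_exists_section (hH' : IsClosed (H' : Set G)) (hH : IsClosed (H : Set G))
    (hle : H' ≤ H) [Finite (H ⧸ H'.subgroupOf H)] :
    ∃ s : G ⧸ H → G ⧸ H', Continuous s ∧ ∀ b, auxP H' H hle (s b) = b := by
  classical
  haveI : IsClosed ((H' : Subgroup G) : Set G) := hH'
  haveI : IsClosed ((H : Subgroup G) : Set G) := hH
  haveI ts1 : TotallySeparatedSpace (G ⧸ H') := aux_totallySeparated_quotient H' hH'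
  haveI ts2 : TotallySeparatedSpace (G ⧸ H) := aux_totallySeparated_quotient H hH
  haveI : TotallyDisconnectedSpace (G ⧸ H') := ts1.totallyDisconnectedSpace
  haveI : TotallyDisconnectedSpace (G ⧸ H) := ts2.totallyDisconnectedSpace
  set D := H ⧸ H'.subgroupOf H with hD
  set p := auxP H' H hle with hp
  -- for every z, a clopen neighbourhood on which p is injective
  have hstep : ∀ z : G ⧸ H', ∃ V : Set (G ⧸ H'), IsClopen V ∧ z ∈ V ∧
      ∀ v₁ ∈ V, ∀ v₂ ∈ V, p v₁ = p v₂ → v₁ = v₂ := by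
    intro z
    set Φ : Set (G ⧸ H') := (fun δ : D => auxRho H' ((δ.out : H) : G) z) ''
      {δ | δ ≠ auxOne H' H} with hΦ
    have hΦfin : Φ.Finite := (toFinite _).image _
    have hzΦ : z ∈ Φᶜ := by
      rintro ⟨δ, hδ, hδz⟩
      exact hδ (aux_rho_eq_self H' H z δ hδz)
    obtain ⟨W, hWclopen, hzW, hWsub⟩ :=
      compact_exists_isClopen_in_isOpen hΦfin.isClosed.isOpen_compl hzΦ
    refine ⟨W \ ⋃ δ ∈ {δ : D | δ ≠ auxOne H' H}, (auxRho H' ((δ.out : H) : G)) ⁻¹' W,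
      hWclopen.diff ((toFinite _).isClopen_biUnion
        (fun δ _ => hWclopen.preimage (auxRho_continuous H' _))), ⟨hzW, ?_⟩, ?_⟩
    · intro hmem
      obtain ⟨δ, hδ, hδz⟩ := mem_iUnion₂.1 hmem
      exact hWsub hδz ⟨δ, hδ, rfl⟩
    · rintro v₁ ⟨hv₁W, hv₁⟩ v₂ ⟨hv₂W, hv₂⟩ hpv
      obtain ⟨δ, hδ⟩ := (aux_fiber_char H' H hle v₁ v₂).1 hpv
      rcases eq_or_ne δ (auxOne H' H) with h1 | h1
      · rw [← hδ, aux_rho_one H' H v₁ δ h1]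
      · exfalso
        exact hv₁ (mem_iUnion₂.2 ⟨δ, h1, by rw [mem_preimage, hδ]; exact hv₂W⟩)
  choose V hVclopen hVmem hVinj using hstep
  -- finite subcover
  obtain ⟨t, ht⟩ := isCompact_univ.elim_finite_subcover V (fun z => (hVclopen z).2)
    (fun z _ => mem_iUnion.2 ⟨z, hVmem z⟩)
  -- images are clopen
  have hUclopen : ∀ z : G ⧸ H', IsClopen (p '' V z) := by
    intro z
    constructor
    · exact (((hVclopen z).1.isCompact).image (auxP_continuous H' H hle)).isClosed
    · have himg : p '' V z = QuotientGroup.mk ''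
          (QuotientGroup.mk (s := H') ⁻¹' (V z)) := by
        ext b
        constructor
        · rintro ⟨v, hv, rfl⟩
          obtain ⟨u, rfl⟩ := QuotientGroup.mk_surjective v
          exact ⟨u, hv, rfl⟩
        · rintro ⟨u, hu, rfl⟩
          exact ⟨QuotientGroup.mk u, hu, rfl⟩
      rw [himg]
      exact QuotientGroup.isOpenMap_coe _
        ((hVclopen z).2.preimage QuotientGroup.continuous_mk)
  -- disjointify the images indexed by the finite set t
  obtain ⟨U, hU1, hU2, hU3, hU4⟩ := aux_disjointify (fun k : ↥t => p '' V k)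
    (fun k => hUclopen k)
  have hUcover : (⋃ k : ↥t, U k) = univ := by
    rw [hU4]
    apply eq_univ_of_forall
    intro b
    obtain ⟨z, rfl⟩ := auxP_surjective H' H hle b
    obtain ⟨k, hk, hzk⟩ := mem_iUnion₂.1 (ht (mem_univ z))
    exact mem_iUnion.2 ⟨⟨k, hk⟩, ⟨z, hzk, rfl⟩⟩
  -- the transversal
  set T : Set (G ⧸ H') := ⋃ k : ↥t, (V k ∩ p ⁻¹' (U k)) with hT
  have hTclopen : IsClopen T := isClopen_iUnion_of_finite (fun k =>
    ((hVclopen k).inter ((hU1 k).preimage (auxP_continuous H' H hle))))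
  have hbij : Function.Bijective (fun v : T => p v.1) := by
    constructor
    · rintro ⟨v₁, hv₁⟩ ⟨v₂, hv₂⟩ h
      obtain ⟨k₁, hk₁⟩ := mem_iUnion.1 hv₁
      obtain ⟨k₂, hk₂⟩ := mem_iUnion.1 hv₂
      have h' : p v₁ = p v₂ := h
      have h12 : k₁ = k₂ := by
        by_contra hne
        refine (hU3 hne).le_bot (⟨mem_preimage.mp hk₁.2, ?_⟩ : p v₁ ∈ U k₁ ⊓ U k₂)
        rw [h']
        exact mem_preimage.mp hk₂.2
      subst h12
      exact Subtype.ext (hVinj k₁ v₁ hk₁.1 v₂ hk₂.1 h')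
    · intro b
      have hb : b ∈ ⋃ k : ↥t, U k := by rw [hUcover]; trivial
      obtain ⟨k, hk⟩ := mem_iUnion.1 hb
      obtain ⟨v, hv, hvb⟩ := hU2 k hk
      exact ⟨⟨v, mem_iUnion.2 ⟨k, hv, by rw [mem_preimage, hvb]; exact hk⟩⟩, hvb⟩
  haveI : CompactSpace T := isCompact_iff_compactSpace.mp hTclopen.1.isCompact
  set e := Equiv.ofBijective _ hbij with he
  have hecont : Continuous (fun v : T => p v.1) :=
    (auxP_continuous H' H hle).comp continuous_subtype_val
  set φ := Continuous.homeoOfEquivCompactToT2 (f := e) hecont with hφ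
  refine ⟨fun b => ((φ.symm b : T) : G ⧸ H'), ?_, ?_⟩
  · exact continuous_subtype_val.comp φ.symm.continuous
  · intro b
    have : φ (φ.symm b) = b := φ.apply_symm_apply b
    exact this

end SectionLemma


section Lift

variable (H' H : Subgroup G) [H'.Normal] [H.Normal]

lemma aux_p_rho (hle : H' ≤ H) (δ : H ⧸ H'.subgroupOf H) (z : G ⧸ H') :
    auxP H' H hle (auxRho H' ((δ.out : H) : G) z) = auxP H' H hle z := by
  obtain ⟨u, rfl⟩ := QuotientGroup.mk_surjective z
  rw [auxRho_mk, auxP_mk, auxP_mk, QuotientGroup.eq]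
  have : (u * ((δ.out : H) : G))⁻¹ * u = ((δ.out : H) : G)⁻¹ := by group
  rw [this]
  exact H.inv_mem (δ.out : H).2

lemma aux_lift {X Y' : Type*} [TopologicalSpace X] [CompactSpace X]
    [TopologicalSpace Y'] [CompactSpace Y'] [T2Space Y'] [TotallyDisconnectedSpace Y']
    (hH' : IsClosed (H' : Set G)) (hH : IsClosed (H : Set G)) (hle : H' ≤ H)
    [Finite (H ⧸ H'.subgroupOf H)]
    (i : X → Y') (hicont : Continuous i) (hi : Function.Injective i)
    (f : X → G) (hf : Continuous f)
    (g : Y' → G ⧸ H) (hg : Continuous g) (hgi : ∀ x, g (i x) = QuotientGroup.mk (f x)) :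
    ∃ g' : Y' → G ⧸ H', Continuous g' ∧ (∀ y, auxP H' H hle (g' y) = g y) ∧
      ∀ x, g' (i x) = QuotientGroup.mk (f x) := by
  classical
  haveI : IsClosed ((H' : Subgroup G) : Set G) := hH'
  haveI ts1 : TotallySeparatedSpace (G ⧸ H') := aux_totallySeparated_quotient H' hH'
  haveI : TotallyDisconnectedSpace (G ⧸ H') := ts1.totallyDisconnectedSpace
  obtain ⟨s, hscont, hsp⟩ := aux_exists_section H' H hH' hH hle
  set D := H ⧸ H'.subgroupOf H with hD
  haveI : Nonempty D := ⟨auxOne H' H⟩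
  set p := auxP H' H hle with hp
  -- the "difference" function on X
  have hex : ∀ x : X, ∃ δ : D, auxRho H' ((δ.out : H) : G) (s (g (i x)))
      = QuotientGroup.mk (f x) := by
    intro x
    apply (aux_fiber_char H' H hle _ _).1
    show p _ = p _
    rw [hsp, hgi]
    exact (auxP_mk H' H hle (f x)).symm
  choose d hd using hex
  -- fibers of d
  set K : D → Set Y' := fun δ => i '' (d ⁻¹' {δ}) with hK
  have hdfiber : ∀ δ, d ⁻¹' {δ} =
      {x | auxRho H' ((δ.out : H) : G) (s (g (i x))) = QuotientGroup.mk (f x)} := by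
    intro δ
    ext x
    simp only [mem_preimage, mem_singleton_iff, mem_setOf_eq]
    constructor
    · rintro rfl; exact hd x
    · intro h
      exact (aux_rho_inj H' H (s (g (i x))) δ (d x) (by rw [h, hd x])).symm
  have hKclosed : ∀ δ, IsClosed (K δ) := by
    intro δ
    have h1 : IsClosed (d ⁻¹' {δ}) := by
      rw [hdfiber]
      exact isClosed_eq
        ((auxRho_continuous H' _).comp (hscont.comp (hg.comp hicont)))
        (QuotientGroup.continuous_mk.comp hf)
    exact (h1.isCompact.image hicont).isClosed
  have hKdis : Pairwise (Function.onFun Disjoint K) := by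
    intro δ δ' hne
    rw [Function.onFun, disjoint_left]
    rintro y ⟨x, hx, rfl⟩ ⟨x', hx', hxx'⟩
    rw [mem_preimage, mem_singleton_iff] at hx hx'
    exact hne (by rw [← hx, ← hx', hi hxx'.symm])
  obtain ⟨Vp, hVpclopen, hKVp, hVpdis, hVpcover⟩ := aux_partition K hKclosed hKdis
  have hcov : ∀ y : Y', ∃ δ : D, y ∈ Vp δ := by
    intro y
    have : y ∈ ⋃ δ, Vp δ := by rw [hVpcover]; trivial
    exact mem_iUnion.1 this
  choose dl hdl using hcov
  set g' : Y' → G ⧸ H' := fun y => auxRho H' (((dl y).out : H) : G) (s (g y)) with hg'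
  have hdluniq : ∀ (y : Y') (δ : D), y ∈ Vp δ → dl y = δ := by
    intro y δ hy
    by_contra hne
    exact (hVpdis hne).le_bot ⟨hdl y, hy⟩
  have hg'eq : ∀ (y : Y') (δ : D), y ∈ Vp δ →
      g' y = auxRho H' ((δ.out : H) : G) (s (g y)) := by
    intro y δ hy
    show auxRho H' (((dl y).out : H) : G) (s (g y)) = _
    rw [hdluniq y δ hy]
  refine ⟨g', ?_, ?_, ?_⟩
  · rw [continuous_def]
    intro O hO
    have : g' ⁻¹' O = ⋃ δ : D, (Vp δ ∩
        (fun y => auxRho H' ((δ.out : H) : G) (s (g y))) ⁻¹' O) := by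
      ext y
      simp only [mem_preimage, mem_iUnion, mem_inter_iff]
      constructor
      · intro hy
        exact ⟨dl y, hdl y, hy⟩
      · rintro ⟨δ, hyδ, hyO⟩
        rw [hg'eq y δ hyδ]
        exact hyO
    rw [this]
    exact isOpen_iUnion (fun δ => ((hVpclopen δ).2.inter
      (hO.preimage ((auxRho_continuous H' _).comp (hscont.comp hg)))))
  · intro y
    show auxP H' H hle (auxRho H' (((dl y).out : H) : G) (s (g y))) = g y
    rw [aux_p_rho H' H hle]
    exact hsp (g y)
  · intro x
    rw [hg'eq (i x) (d x) (hKVp (d x) ⟨x, rfl, rfl⟩)]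
    exact hd x

end Lift


theorem aux_main {X Y : Type u} [TopologicalSpace X] [CompactSpace X]
    [TopologicalSpace Y] [CompactSpace Y] [T2Space Y] [TotallyDisconnectedSpace Y]
    (i : X → Y) (hic : Continuous i) (hi : Function.Injective i)
    (f : X → G) (hf : Continuous f) :
    ∃ g : Y → G, Continuous g ∧ ∀ x, g (i x) = f x := by
  classical
  -- the Zorn poset: pairs (H, c) of a subgroup and a coset-valued map, encoded with
  -- order-duals so that "bigger" means "smaller subgroup, smaller cosets"
  set S : Set ((Subgroup G)ᵒᵈ × (Y → (Set G)ᵒᵈ)) :=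
    {P | (OrderDual.ofDual P.1).Normal ∧
      IsClosed ((OrderDual.ofDual P.1 : Subgroup G) : Set G) ∧
      (∀ y, ∃ u : G,
        OrderDual.ofDual (P.2 y) = u • ((OrderDual.ofDual P.1 : Subgroup G) : Set G)) ∧
      IsClosed {q : Y × G | q.2 ∈ OrderDual.ofDual (P.2 q.1)} ∧
      ∀ x, f x ∈ OrderDual.ofDual (P.2 (i x))} with hS
  -- the start element
  have htop : (OrderDual.toDual (⊤ : Subgroup G),
      fun _ : Y => OrderDual.toDual (univ : Set G)) ∈ S := by
    refine ⟨?_, ?_, ?_, ?_, ?_⟩ <;>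
      dsimp only [OrderDual.ofDual_toDual]
    · infer_instance
    · rw [Subgroup.coe_top]; exact isClosed_univ
    · intro y
      refine ⟨1, ?_⟩
      rw [Subgroup.coe_top]
      ext g
      simp [mem_smul_set_iff_inv_smul_mem]
    · have : {q : Y × G | q.2 ∈ (univ : Set G)} = univ := by
        ext q; simp
      rw [this]; exact isClosed_univ
    · intro x; trivial
  -- chains have upper bounds
  have hchain : ∀ c ⊆ S, IsChain (· ≤ ·) c → ∀ P₀ ∈ c, ∃ ub ∈ S, ∀ z ∈ c, z ≤ ub := by
    intro c hcS hchain P₀ hP₀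
    haveI : Nonempty ↥c := ⟨⟨P₀, hP₀⟩⟩
    set Hinf : Subgroup G := ⨅ (P : ↥c), OrderDual.ofDual P.1.1 with hHinf
    set cinf : Y → Set G := fun y => ⋂ P : ↥c, OrderDual.ofDual (P.1.2 y) with hcinf
    have hmem : ∀ P : ↥c, P.1 ∈ S := fun P => hcS P.2
    -- each coset set is nonempty compact closed
    have hcoset : ∀ (P : ↥c) (y : Y), ∃ u : G,
        OrderDual.ofDual (P.1.2 y) = u • ((OrderDual.ofDual P.1.1 : Subgroup G) : Set G) :=
      fun P => (hmem P).2.2.1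
    have hclosed : ∀ (P : ↥c) (y : Y), IsClosed (OrderDual.ofDual (P.1.2 y)) := by
      intro P y
      obtain ⟨u, hu⟩ := hcoset P y
      rw [hu]
      exact ((hmem P).2.1).smul u
    have hne : ∀ (P : ↥c) (y : Y), (OrderDual.ofDual (P.1.2 y)).Nonempty := by
      intro P y
      obtain ⟨u, hu⟩ := hcoset P y
      exact ⟨u, by rw [hu]; exact ⟨1, Subgroup.one_mem _, by simp⟩⟩
    have hdir : ∀ y : Y,
        Directed (fun s t : Set G => s ⊇ t) (fun P : ↥c => OrderDual.ofDual (P.1.2 y)) := by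
      intro y P Q
      rcases hchain.total P.2 Q.2 with hle | hle
      · exact ⟨Q, fun v hv => (hle.2 y : _ ≤ _) hv, le_rfl⟩
      · exact ⟨P, le_rfl, fun v hv => (hle.2 y : _ ≤ _) hv⟩
    -- the intersection of the cosets is a coset of the intersection
    have hkey : ∀ y : Y, ∃ u : G, cinf y = u • (Hinf : Set G) := by
      intro y
      obtain ⟨x₀, hx₀⟩ := IsCompact.nonempty_iInter_of_directed_nonempty_isCompact_isClosed
        _ (hdir y) (fun P => hne P y) (fun P => (hclosed P y).isCompact)
        (fun P => hclosed P y)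
      have hx₀' : ∀ P : ↥c, x₀ ∈ OrderDual.ofDual (P.1.2 y) := by
        intro P
        exact mem_iInter.1 hx₀ P
      refine ⟨x₀, ?_⟩
      ext v
      constructor
      · intro hv
        have hv' : ∀ P : ↥c, v ∈ OrderDual.ofDual (P.1.2 y) := mem_iInter.1 hv
        rw [mem_smul_set_iff_inv_smul_mem, smul_eq_mul, SetLike.mem_coe,
          Subgroup.mem_iInf]
        intro P
        obtain ⟨u, hu⟩ := hcoset P y
        have h1 : u⁻¹ * x₀ ∈ OrderDual.ofDual P.1.1 := by
          have := hx₀' P; rw [hu, mem_smul_set_iff_inv_smul_mem, smul_eq_mul] at this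
          exact this
        have h2 : u⁻¹ * v ∈ OrderDual.ofDual P.1.1 := by
          have := hv' P; rw [hu, mem_smul_set_iff_inv_smul_mem, smul_eq_mul] at this
          exact this
        have : x₀⁻¹ * v = (u⁻¹ * x₀)⁻¹ * (u⁻¹ * v) := by group
        rw [this]
        exact Subgroup.mul_mem _ (Subgroup.inv_mem _ h1) h2
      · intro hv
        rw [mem_smul_set_iff_inv_smul_mem, smul_eq_mul, SetLike.mem_coe] at hv
        rw [mem_iInter]
        intro P
        obtain ⟨u, hu⟩ := hcoset P y
        have h1 : u⁻¹ * x₀ ∈ OrderDual.ofDual P.1.1 := by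
          have := hx₀' P; rw [hu, mem_smul_set_iff_inv_smul_mem, smul_eq_mul] at this
          exact this
        have h2 : x₀⁻¹ * v ∈ OrderDual.ofDual P.1.1 :=
          Subgroup.mem_iInf.1 hv P
        rw [hu, mem_smul_set_iff_inv_smul_mem, smul_eq_mul]
        have : u⁻¹ * v = (u⁻¹ * x₀) * (x₀⁻¹ * v) := by group
        rw [this]
        exact Subgroup.mul_mem _ h1 h2
    -- the upper bound
    refine ⟨(OrderDual.toDual Hinf, fun y => OrderDual.toDual (cinf y)), ⟨?_, ?_, ?_, ?_, ?_⟩, ?_⟩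
    · -- normality
      show Hinf.Normal
      constructor
      intro n hn g
      rw [hHinf, Subgroup.mem_iInf] at hn ⊢
      intro P
      haveI : (OrderDual.ofDual P.1.1).Normal := (hmem P).1
      exact Subgroup.Normal.conj_mem ‹_› n (hn P) g
    · show IsClosed (Hinf : Set G)
      rw [hHinf, Subgroup.coe_iInf]
      exact isClosed_iInter (fun P => (hmem P).2.1)
    · exact hkey
    · show IsClosed {q : Y × G | q.2 ∈ cinf q.1}
      have : {q : Y × G | q.2 ∈ cinf q.1} =
          ⋂ P : ↥c, {q : Y × G | q.2 ∈ OrderDual.ofDual (P.1.2 q.1)} := by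
        ext q
        simp only [hcinf, mem_iInter, mem_setOf_eq]
      rw [this]
      exact isClosed_iInter (fun P => (hmem P).2.2.2.1)
    · intro x
      show f x ∈ cinf (i x)
      rw [hcinf]
      exact mem_iInter.2 (fun P => (hmem P).2.2.2.2 x)
    · intro z hz
      refine ⟨?_, ?_⟩
      · show Hinf ≤ OrderDual.ofDual z.1
        exact iInf_le (fun P : ↥c => OrderDual.ofDual P.1.1) ⟨z, hz⟩
      · intro y
        show cinf y ⊆ OrderDual.ofDual (z.2 y)
        exact iInter_subset (fun P : ↥c => OrderDual.ofDual (P.1.2 y)) ⟨z, hz⟩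
  -- apply Zorn's lemma
  obtain ⟨m, -, hmS, hmax⟩ := zorn_le_nonempty₀ S hchain _ htop
  obtain ⟨hmNormal, hmClosed, hmCoset, hmGraph, hmBoundary⟩ := hmS
  haveI : (OrderDual.ofDual m.1).Normal := hmNormal
  set Hm : Subgroup G := OrderDual.ofDual m.1 with hHm
  set cm : Y → Set G := fun y => OrderDual.ofDual (m.2 y) with hcm
  choose σ hσ using hmCoset
  have hσc : ∀ y, cm y = σ y • (Hm : Set G) := hσ
  have hB : ∀ x, f x ∈ cm (i x) := hmBoundary
  have hG : IsClosed {q : Y × G | q.2 ∈ cm q.1} := hmGraph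
  have hσmem : ∀ y, σ y ∈ cm y := by
    intro y
    rw [hσc y, mem_smul_set_iff_inv_smul_mem, smul_eq_mul]
    simp only [inv_mul_cancel, SetLike.mem_coe]
    exact Subgroup.one_mem _
  -- the induced map to the quotient
  have hc : ∀ y v, v ∈ cm y ↔
      (QuotientGroup.mk v : G ⧸ Hm) = QuotientGroup.mk (σ y) := by
    intro y v
    rw [hσc y, mem_smul_set_iff_inv_smul_mem, smul_eq_mul, SetLike.mem_coe,
      QuotientGroup.eq]
    constructor
    · intro h
      have : v⁻¹ * σ y = ((σ y)⁻¹ * v)⁻¹ := by group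
      rw [this]
      exact Subgroup.inv_mem _ h
    · intro h
      have : (σ y)⁻¹ * v = (v⁻¹ * σ y)⁻¹ := by group
      rw [this]
      exact Subgroup.inv_mem _ h
  -- the graph is closed
  -- key continuity principle
  have hproj : ∀ (C : Set G) , IsClosed C → IsClosed {y : Y | (cm y ∩ C).Nonempty} := by
    intro C hC
    have : {y : Y | (cm y ∩ C).Nonempty} =
        Prod.fst '' ({q : Y × G | q.2 ∈ cm q.1} ∩ (univ ×ˢ C)) := by
      ext y
      constructor
      · rintro ⟨v, hv1, hv2⟩
        exact ⟨(y, v), ⟨hv1, trivial, hv2⟩, rfl⟩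
      · rintro ⟨⟨y', v⟩, ⟨hv1, -, hv2⟩, rfl⟩
        exact ⟨v, hv1, hv2⟩
    rw [this]
    exact isClosedMap_fst_of_compactSpace _ (hG.inter (isClosed_univ.prod hC))
  -- Claim: Hm = ⊥
  have hbot : Hm = ⊥ := by
    by_contra hne
    obtain ⟨a, ha⟩ := Subgroup.ne_bot_iff_exists_ne_one.1 hne
    have ha' : ((a : G) : G) ≠ 1 := fun h => ha (Subtype.ext h)
    haveI : TotallySeparatedSpace G :=
      loc_compact_t2_tot_disc_iff_tot_sep.mp ‹_›
    obtain ⟨U, hUclopen, h1U, haU⟩ :=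
      exists_isClopen_of_totally_separated (ha'.symm : (1 : G) ≠ (a : G))
    obtain ⟨N, hNU⟩ :=
      IsTopologicalGroup.exist_openNormalSubgroup_sub_clopen_nhds_of_one hUclopen h1U
    set H' : Subgroup G := Hm ⊓ N.toSubgroup with hH'
    haveI : H'.Normal := Subgroup.normal_inf_normal _ _
    have hH'closed : IsClosed (H' : Set G) := by
      rw [hH', Subgroup.coe_inf]
      exact hmClosed.inter N.toOpenSubgroup.isClosed
    have hle : H' ≤ Hm := inf_le_left
    -- finiteness of the relative index
    haveI : CompactSpace ↥Hm := isCompact_iff_compactSpace.mp hmClosed.isCompact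
    haveI : Finite (↥Hm ⧸ H'.subgroupOf Hm) := by
      apply Subgroup.quotient_finite_of_isOpen
      have : ((H'.subgroupOf Hm : Subgroup ↥Hm) : Set ↥Hm) =
          (Subtype.val : ↥Hm → G) ⁻¹' (N.toSubgroup : Set G) := by
        ext h
        simp only [SetLike.mem_coe, Subgroup.mem_subgroupOf, mem_preimage]
        rw [hH']
        simp only [Subgroup.mem_inf]
        exact ⟨fun hh => hh.2, fun hh => ⟨h.2, hh⟩⟩
      rw [this]
      exact N.isOpen.preimage continuous_subtype_val
    -- the quotient map associated to m
    set g : Y → G ⧸ Hm := fun y => QuotientGroup.mk (σ y) with hgdef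
    have hgcont : Continuous g := by
      rw [continuous_iff_isClosed]
      intro C hC
      have : g ⁻¹' C = {y : Y | (cm y ∩ (QuotientGroup.mk ⁻¹' C)).Nonempty} := by
        ext y
        simp only [mem_preimage, mem_setOf_eq]
        constructor
        · intro hy
          exact ⟨σ y, hσmem y, hy⟩
        · rintro ⟨v, hv1, hv2⟩
          rw [mem_preimage] at hv2
          rw [(hc y v).1 hv1] at hv2
          exact hv2
      rw [this]
      exact hproj _ (hC.preimage QuotientGroup.continuous_mk)
    have hgi : ∀ x, g (i x) = QuotientGroup.mk (f x) :=
      fun x => ((hc (i x) (f x)).1 (hB x)).symm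
    -- lift to the smaller subgroup
    obtain ⟨g', hg'cont, hg'p, hg'i⟩ := aux_lift H' Hm hH'closed hmClosed hle
      i hic hi f hf g hgcont hgi
    -- the new element of S
    haveI : IsClosed ((H' : Subgroup G) : Set G) := hH'closed
    haveI ts' : TotallySeparatedSpace (G ⧸ H') := aux_totallySeparated_quotient H' hH'closed
    haveI : TotallyDisconnectedSpace (G ⧸ H') := ts'.totallyDisconnectedSpace
    set m' : (Subgroup G)ᵒᵈ × (Y → (Set G)ᵒᵈ) :=
      (OrderDual.toDual H', fun y => OrderDual.toDual
        ((QuotientGroup.mk : G → G ⧸ H') ⁻¹' {g' y})) with hm'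
    have hm'S : m' ∈ S := by
      refine ⟨?_, ?_, ?_, ?_, ?_⟩ <;> dsimp only [m', OrderDual.ofDual_toDual]
      · infer_instance
      · exact hH'closed
      · intro y
        obtain ⟨u, hu⟩ := QuotientGroup.mk_surjective (g' y)
        refine ⟨u, ?_⟩
        ext v
        simp only [mem_preimage, mem_singleton_iff, ← hu]
        rw [QuotientGroup.eq, mem_smul_set_iff_inv_smul_mem, smul_eq_mul, SetLike.mem_coe]
        constructor
        · intro h
          have : u⁻¹ * v = (v⁻¹ * u)⁻¹ := by group
          rw [this]; exact Subgroup.inv_mem _ h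
        · intro h
          have : v⁻¹ * u = (u⁻¹ * v)⁻¹ := by group
          rw [this]; exact Subgroup.inv_mem _ h
      · have : {q : Y × G | q.2 ∈ (QuotientGroup.mk : G → G ⧸ H') ⁻¹' {g' q.1}} =
            {q : Y × G | (QuotientGroup.mk q.2 : G ⧸ H') = g' q.1} := by
          ext q; simp [mem_preimage]
        rw [this]
        exact isClosed_eq (QuotientGroup.continuous_mk.comp continuous_snd)
          (hg'cont.comp continuous_fst)
      · intro x
        simp only [mem_preimage, mem_singleton_iff]
        exact (hg'i x).symm
    have hmm' : m ≤ m' := by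
      refine ⟨?_, ?_⟩
      · show H' ≤ Hm
        exact hle
      · intro y
        show (QuotientGroup.mk : G → G ⧸ H') ⁻¹' {g' y} ⊆ cm y
        intro v hv
        rw [mem_preimage, mem_singleton_iff] at hv
        rw [hc y v]
        have := congrArg (auxP H' Hm hle) hv
        rw [auxP_mk] at this
        rw [this, hg'p y]
      -- done
    have hle' := hmax hm'S hmm'
    have hHmH' : Hm ≤ H' := hle'.1
    exact haU (hNU ((inf_le_right : H' ≤ N.toSubgroup) (hHmH' a.2)))
  -- now Hm = ⊥ and cm y = {σ y}
  have hsingle : ∀ y, cm y = {σ y} := by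
    intro y
    rw [hσc y, hbot]
    rw [Subgroup.coe_bot, smul_set_singleton, smul_eq_mul, mul_one]
  have hσcont : Continuous σ := by
    rw [continuous_iff_isClosed]
    intro C hC
    have : σ ⁻¹' C = {y : Y | (cm y ∩ C).Nonempty} := by
      ext y
      simp only [mem_preimage, mem_setOf_eq, hsingle y]
      constructor
      · intro hy; exact ⟨σ y, rfl, hy⟩
      · rintro ⟨v, rfl, hv⟩; exact hv
    rw [this]
    exact hproj C hC
  refine ⟨σ, hσcont, ?_⟩
  intro x
  have hx := hB x
  rw [hsingle (i x)] at hx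
  exact hx.symm

end Groups


/-- Let `G` be a profinite group. Then the underlying profinite space of `G`
is an injective object in the category `Profinite`: for every injective continuous map
`i : X → Y` between profinite spaces and every continuous map `f : X → G`, there exists a
continuous map `g : Y → G` with `g ∘ i = f`. -/
theorem profiniteGroup_injective_in_Profinite
    (G : Type u) [Group G] [TopologicalSpace G] [IsTopologicalGroup G]
    [CompactSpace G] [T2Space G] [TotallyDisconnectedSpace G]
    (X Y : Profinite.{u}) (i : C(X, Y)) (hi : Function.Injective i)
    (f : C(X, G)) :
    ∃ g : C(Y, G), g.comp i = f := by
  obtain ⟨σ, hσcont, hσ⟩ := aux_main (G := G) (⇑i) i.continuous hi (⇑f) f.continuous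
  exact ⟨⟨σ, hσcont⟩, ContinuousMap.ext hσ⟩
end

section
/- Let i : A → B be a continuous map of profinite spaces and let M be a profinite abelian group. Assume that for every finite abelian group F (with the discrete topology) the restriction map C(B,F) → C(A,F), g ↦ g ∘ i, is surjective. Then the restriction map C(B,M) → C(A,M), g ↦ g ∘ i, is surjective. -/
universe u

open Set

section Aux

variable {B M : Type u}
  [TopologicalSpace B] [CompactSpace B] [T2Space B]
  [AddCommGroup M] [TopologicalSpace M] [IsTopologicalAddGroup M]
  [CompactSpace M] [T2Space M]

/-- Projection to `B` of a closed subset of `B × M` is closed. -/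
lemma proj_closed {Z : Set (B × M)} (hZ : IsClosed Z) {C : Set M} (hC : IsClosed C) :
    IsClosed (Prod.fst '' (Z ∩ univ ×ˢ C)) :=
  ((hZ.isCompact.inter_right (isClosed_univ.prod hC)).image continuous_fst).isClosed

lemma exists_sub_fibers (N : AddSubgroup M) (Z : Set (B × M))
    (hZc : IsClosed Z) (hne : ∀ b, ∃ m, (b, m) ∈ Z)
    (hcos : ∀ b m m', (b, m) ∈ Z → ((b, m') ∈ Z ↔ m' - m ∈ N))
    (U : AddSubgroup M) (hU : IsOpen (U : Set M)) :
    ∃ Z'' : Set (B × M), IsClosed Z'' ∧ Z'' ⊆ Z ∧ (∀ b, ∃ m, (b, m) ∈ Z'') ∧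
      (∀ b m m', (b, m) ∈ Z'' → ((b, m') ∈ Z'' ↔ m' - m ∈ N ⊓ U)) := by
  have hUc : IsClosed (U : Set M) := AddSubgroup.isClosed_of_isOpen U hU
  set O : M → Set B := fun m => {b | ∃ z, (b, z) ∈ Z ∧ z - m ∈ U} with hO
  set W : M → Set M := fun m => ⋃ n ∈ (N : Set M), {y | y - m - n ∈ U} with hW
  have hWopen : ∀ m, IsOpen (W m) := fun m =>
    isOpen_biUnion fun n _ => hU.preimage (by fun_prop)
  have key1 : ∀ m b z z', (b, z) ∈ Z → (b, z') ∈ Z → z ∈ W m → z' ∈ W m := by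
    intro m b z z' hz hz' hzW
    simp only [hW, mem_iUnion, mem_setOf_eq] at hzW ⊢
    obtain ⟨n, hn, hnU⟩ := hzW
    refine ⟨n + (z' - z), N.add_mem hn ((hcos b z z' hz).mp hz'), ?_⟩
    have : z' - m - (n + (z' - z)) = z - m - n := by abel
    rwa [this]
  have key2 : ∀ m b, b ∈ O m ↔ ∃ z, (b, z) ∈ Z ∧ z ∈ W m := by
    intro m b
    constructor
    · rintro ⟨z, hz, hzU⟩
      refine ⟨z, hz, ?_⟩
      simp only [hW, mem_iUnion, mem_setOf_eq]
      exact ⟨0, N.zero_mem, by simpa using hzU⟩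
    · rintro ⟨z, hz, hzW⟩
      simp only [hW, mem_iUnion, mem_setOf_eq] at hzW
      obtain ⟨n, hn, hnU⟩ := hzW
      refine ⟨z - n, (hcos b z (z - n) hz).mpr (by simpa using N.neg_mem hn), ?_⟩
      have : z - n - m = z - m - n := by abel
      rwa [this]
  have hOopen : ∀ m, IsOpen (O m) := by
    intro m
    have : O m = (Prod.fst '' (Z ∩ univ ×ˢ (W m)ᶜ))ᶜ := by
      ext b
      simp only [mem_compl_iff]
      constructor
      · intro hb hmem
        obtain ⟨⟨b', y⟩, ⟨hpZ, hy⟩, rfl⟩ := hmem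
        obtain ⟨z, hz, hzW⟩ := (key2 m b').mp hb
        exact hy.2 (key1 m b' z y hz hpZ hzW)
      · intro hb
        obtain ⟨z, hz⟩ := hne b
        by_cases hzW : z ∈ W m
        · exact (key2 m b).mpr ⟨z, hz, hzW⟩
        · exact absurd ⟨(b, z), ⟨hz, mem_univ _, hzW⟩, rfl⟩ hb
    rw [this]
    exact (proj_closed hZc (hWopen m).isClosed_compl).isOpen_compl
  have hOclosed : ∀ m, IsClosed (O m) := by
    intro m
    have : O m = Prod.fst '' (Z ∩ univ ×ˢ {y | y - m ∈ U}) := by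
      ext b
      simp only [hO, mem_setOf_eq, mem_image, mem_inter_iff, mem_prod, mem_univ, true_and]
      constructor
      · rintro ⟨z, hz, hzU⟩; exact ⟨(b, z), ⟨hz, hzU⟩, rfl⟩
      · rintro ⟨p, ⟨hp, hpU⟩, rfl⟩; exact ⟨p.2, hp, hpU⟩
    rw [this]
    exact proj_closed hZc (hUc.preimage (by fun_prop))
  have hcover : (univ : Set B) ⊆ ⋃ m, O m := by
    intro b _
    obtain ⟨z, hz⟩ := hne b
    exact mem_iUnion.mpr ⟨z, z, hz, by simpa using U.zero_mem⟩
  obtain ⟨t, ht⟩ := isCompact_univ.elim_finite_subcover O hOopen hcover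
  set n := t.card with hn
  set mj : Fin n → M := fun j => ((t.equivFin.symm j : t) : M) with hmj
  set V : Fin n → Set B := fun j => O (mj j) \ ⋃ l ∈ {l : Fin n | l < j}, O (mj l) with hV
  have hVclosed : ∀ j, IsClosed (V j) := fun j =>
    (hOclosed _).inter (isOpen_biUnion fun l _ => hOopen _).isClosed_compl
  have hVmemO : ∀ j b, b ∈ V j → b ∈ O (mj j) := fun j b hb => hb.1
  have hVmem : ∀ b, ∃ j, b ∈ V j := by
    intro b
    classical
    have hbU : b ∈ ⋃ m ∈ t, O m := ht (mem_univ b)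
    simp only [mem_iUnion] at hbU
    obtain ⟨m, hmt, hbm⟩ := hbU
    have hsne : (Finset.univ.filter (fun j => b ∈ O (mj j))).Nonempty := by
      refine ⟨t.equivFin ⟨m, hmt⟩, ?_⟩
      simp only [Finset.mem_filter, Finset.mem_univ, true_and, hmj]
      rw [Equiv.symm_apply_apply]
      exact hbm
    set j0 := (Finset.univ.filter (fun j => b ∈ O (mj j))).min' hsne with hj0
    have hj0mem : b ∈ O (mj j0) := by
      have := (Finset.univ.filter (fun j => b ∈ O (mj j))).min'_mem hsne
      simpa only [Finset.mem_filter, Finset.mem_univ, true_and] using this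
    refine ⟨j0, hj0mem, ?_⟩
    intro hmem
    simp only [mem_iUnion, mem_setOf_eq] at hmem
    obtain ⟨l, hl, hbl⟩ := hmem
    have : j0 ≤ l := Finset.min'_le _ _ (by
      simp only [Finset.mem_filter, Finset.mem_univ, true_and]; exact hbl)
    exact absurd hl (not_lt.mpr this)
  have hVdisj : ∀ b j j', b ∈ V j → b ∈ V j' → j = j' := by
    intro b j j' hj hj'
    by_contra hne'
    rcases lt_or_gt_of_ne hne' with hlt | hlt
    · exact hj'.2 (mem_biUnion hlt (hVmemO j b hj))
    · exact hj.2 (mem_biUnion hlt (hVmemO j' b hj'))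
  refine ⟨⋃ j, (V j ×ˢ {y | y - mj j ∈ U}) ∩ Z, ?_, ?_, ?_, ?_⟩
  · exact isClosed_iUnion_of_finite fun j =>
      ((hVclosed j).prod (hUc.preimage (by fun_prop))).inter hZc
  · intro p hp
    simp only [mem_iUnion] at hp
    obtain ⟨j, hj⟩ := hp
    exact hj.2
  · intro b
    obtain ⟨j, hj⟩ := hVmem b
    obtain ⟨z, hz, hzU⟩ := hVmemO j b hj
    exact ⟨z, mem_iUnion.mpr ⟨j, ⟨⟨hj, hzU⟩, hz⟩⟩⟩
  · intro b m m' hm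
    simp only [mem_iUnion, mem_inter_iff, mem_prod, mem_setOf_eq] at hm ⊢
    obtain ⟨j, ⟨⟨hbV, hmU⟩, hmZ⟩⟩ := hm
    constructor
    · rintro ⟨j', ⟨⟨hbV', hmU'⟩, hmZ'⟩⟩
      have hjj : j' = j := hVdisj b j' j hbV' hbV
      subst hjj
      refine AddSubgroup.mem_inf.mpr ⟨(hcos b m m' hmZ).mp hmZ', ?_⟩
      have : m' - m = (m' - mj j') - (m - mj j') := by abel
      rw [this]
      exact U.sub_mem hmU' hmU
    · intro hmm
      rcases AddSubgroup.mem_inf.mp hmm with ⟨hmN, hmU2⟩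
      refine ⟨j, ⟨⟨hbV, ?_⟩, (hcos b m m' hmZ).mpr hmN⟩⟩
      have : m' - mj j = (m' - m) + (m - mj j) := by abel
      rw [this]
      exact U.add_mem hmU2 hmU

variable {A : Type u} [TopologicalSpace A]

/-- A "partial solution": a closed subgroup `N` together with a closed subset `Z ⊆ B × M`
whose fibers are cosets of `N` and which contains the graph of `f` along `i`. -/
def GoodPair (i : C(A, B)) (f : C(A, M)) (p : AddSubgroup M × Set (B × M)) : Prop :=
  IsClosed (p.1 : Set M) ∧ IsClosed p.2 ∧ (∀ a, (i a, f a) ∈ p.2) ∧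
    (∀ b, ∃ m, (b, m) ∈ p.2) ∧
    ∀ b m m', (b, m) ∈ p.2 → ((b, m') ∈ p.2 ↔ m' - m ∈ p.1)

lemma goodPair_refine (i : C(A, B)) (f : C(A, M))
    (h : ∀ (F : Type u) [AddCommGroup F] [Fintype F] [TopologicalSpace F] [DiscreteTopology F],
      Function.Surjective (fun g : C(B, F) => g.comp i))
    (N : AddSubgroup M) (Z : Set (B × M)) (hg : GoodPair i f (N, Z))
    (U : AddSubgroup M) (hU : IsOpen (U : Set M)) :
    ∃ Z', GoodPair i f (N ⊓ U, Z') ∧ Z' ⊆ Z := by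
  obtain ⟨hNc, hZc, hZf, hne, hcos⟩ := hg
  obtain ⟨Z'', hZ''c, hZ''sub, hZ''ne, hZ''cos⟩ := exists_sub_fibers N Z hZc hne hcos U hU
  have hUc : IsClosed (U : Set M) := AddSubgroup.isClosed_of_isOpen U hU
  -- the finite abelian group `F = N / (N ∩ U)`
  set K : AddSubgroup N := U.addSubgroupOf N with hK
  haveI : CompactSpace N := isCompact_iff_compactSpace.mp hNc.isCompact
  have hKopen : IsOpen (K : Set N) := by
    have : (K : Set N) = (Subtype.val : N → M) ⁻¹' (U : Set M) := by
      ext x; simp [hK, AddSubgroup.mem_addSubgroupOf]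
    rw [this]
    exact hU.preimage continuous_subtype_val
  haveI hFfin : Finite (N ⧸ K) := AddSubgroup.quotient_finite_of_isOpen K hKopen
  letI : TopologicalSpace (N ⧸ K) := ⊥
  haveI : DiscreteTopology (N ⧸ K) := ⟨rfl⟩
  letI : Fintype (N ⧸ K) := Fintype.ofFinite _
  -- the difference cocycle `δ : A → F`
  have hza : ∀ a : A, ∃ z, (i a, z) ∈ Z'' := fun a => hZ''ne (i a)
  choose za hzaZ using hza
  have hzaN : ∀ a, za a - f a ∈ N := fun a =>
    (hcos (i a) (f a) (za a) (hZf a)).mp (hZ''sub (hzaZ a))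
  set δ : A → N ⧸ K := fun a => QuotientAddGroup.mk ⟨za a - f a, hzaN a⟩ with hδ
  have hδq : ∀ (a : A) (q : N ⧸ K), δ a = q ↔ (i a, f a + ((Quotient.out q : N) : M)) ∈ Z'' := by
    intro a q
    set w0 : N := Quotient.out q with hw0
    have houtq : (QuotientAddGroup.mk w0 : N ⧸ K) = q := QuotientAddGroup.out_eq' q
    rw [hδ, ← houtq]
    rw [QuotientAddGroup.eq]
    have hmemN : (f a + (w0 : M)) - za a ∈ N := by
      have : (f a + (w0 : M)) - za a = (w0 : M) - (za a - f a) := by abel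
      rw [this]
      exact N.sub_mem w0.2 (hzaN a)
    constructor
    · intro hkk
      have hkU : (f a + (w0 : M)) - za a ∈ U := by
        have : ((-(⟨za a - f a, hzaN a⟩ : N) + w0 : N) : M) = (f a + (w0 : M)) - za a := by
          push_cast; abel
        have := hkk
        rw [AddSubgroup.mem_addSubgroupOf] at this
        rwa [‹((-(⟨za a - f a, hzaN a⟩ : N) + w0 : N) : M) = (f a + (w0 : M)) - za a›] at this
      exact (hZ''cos (i a) (za a) (f a + (w0 : M)) (hzaZ a)).mpr
        (AddSubgroup.mem_inf.mpr ⟨hmemN, hkU⟩)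
    · intro hmem
      have := (hZ''cos (i a) (za a) (f a + (w0 : M)) (hzaZ a)).mp hmem
      rcases AddSubgroup.mem_inf.mp this with ⟨-, hkU⟩
      rw [AddSubgroup.mem_addSubgroupOf]
      have : ((-(⟨za a - f a, hzaN a⟩ : N) + w0 : N) : M) = (f a + (w0 : M)) - za a := by
        push_cast; abel
      rw [this]
      exact hkU
  -- `δ` is continuous
  have hδfibc : ∀ q : N ⧸ K, IsClosed (δ ⁻¹' {q}) := by
    intro q
    have : δ ⁻¹' {q} = (fun a => (i a, f a + ((Quotient.out q : N) : M))) ⁻¹' Z'' := by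
      ext a
      simp only [mem_preimage, mem_singleton_iff]
      exact hδq a q
    rw [this]
    exact hZ''c.preimage (by fun_prop)
  have hδcont : Continuous δ := by
    have hopen : ∀ q : N ⧸ K, IsOpen (δ ⁻¹' {q}) := by
      intro q
      rw [← isClosed_compl_iff]
      have : (δ ⁻¹' {q})ᶜ = ⋃ q' ∈ ({q}ᶜ : Set (N ⧸ K)), δ ⁻¹' {q'} := by
        ext a
        simp only [mem_compl_iff, mem_iUnion, mem_preimage, mem_singleton_iff]
        constructor
        · intro hne'; exact ⟨δ a, hne', rfl⟩
        · rintro ⟨q', hq', hqe⟩; rw [hqe]; exact hq'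
      rw [this]
      exact Set.Finite.isClosed_biUnion (Set.toFinite _) fun q' _ => hδfibc q'
    have : IsLocallyConstant δ := fun s => by
      have : δ ⁻¹' s = ⋃ q ∈ s, δ ⁻¹' {q} := by
        ext a; simp [mem_iUnion]
      rw [this]
      exact isOpen_biUnion fun q _ => hopen q
    exact this.continuous
  -- correct using the hypothesis `h`
  obtain ⟨e, he⟩ := h (N ⧸ K) ⟨δ, hδcont⟩
  have he' : ∀ a, e (i a) = δ a := fun a => ContinuousMap.ext_iff.mp he a
  set w : B → M := fun b => ((Quotient.out (e b) : N) : M) with hw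
  have hwc : Continuous w := by
    have : Continuous fun q : N ⧸ K => ((Quotient.out q : N) : M) :=
      continuous_of_discreteTopology
    exact this.comp e.continuous
  have hwN : ∀ b, w b ∈ N := fun b => (Quotient.out (e b) : N).2
  refine ⟨(fun p : B × M => (p.1, p.2 + w p.1)) ⁻¹' Z'', ⟨?_, ?_, ?_, ?_, ?_⟩, ?_⟩
  · rw [AddSubgroup.coe_inf]
    exact hNc.inter hUc
  · exact hZ''c.preimage (continuous_fst.prodMk (continuous_snd.add (hwc.comp continuous_fst)))
  · intro a
    have : w (i a) = ((Quotient.out (δ a) : N) : M) := by simp only [hw]; rw [he' a]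
    simp only [mem_preimage]
    rw [this]
    exact (hδq a (δ a)).mp rfl
  · intro b
    obtain ⟨z, hz⟩ := hZ''ne b
    exact ⟨z - w b, by simpa [sub_add_cancel] using hz⟩
  · intro b m m' hm
    simp only [mem_preimage] at hm ⊢
    rw [hZ''cos b (m + w b) (m' + w b) hm]
    have : m' + w b - (m + w b) = m' - m := by abel
    rw [this]
  · intro p hp
    simp only [mem_preimage] at hp
    have hpZ : (p.1, p.2 + w p.1) ∈ Z := hZ''sub hp
    have := (hcos p.1 (p.2 + w p.1) p.2 hpZ).mpr
      (by simpa using N.neg_mem (hwN p.1))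
    exact this

end Aux


/-- Let `i : A → B` be a continuous map of profinite spaces and let `M` be a
profinite abelian group. Assume that for every finite abelian group `F` (with the discrete
topology) the restriction map `C(B,F) → C(A,F)`, `g ↦ g ∘ i`, is surjective. Then the
restriction map `C(B,M) → C(A,M)`, `g ↦ g ∘ i`, is surjective. -/
theorem surjective_comp_profinite_abelian_coefficients
    (A B : Profinite.{u}) (i : C(A, B))
    (M : Type u) [AddCommGroup M] [TopologicalSpace M] [IsTopologicalAddGroup M]
    [CompactSpace M] [T2Space M] [TotallyDisconnectedSpace M]
    (h : ∀ (F : Type u) [AddCommGroup F] [Fintype F] [TopologicalSpace F] [DiscreteTopology F],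
      Function.Surjective (fun g : C(B, F) => g.comp i)) :
    Function.Surjective (fun g : C(B, M) => g.comp i) := by
  intro f
  -- Zorn's lemma on partial solutions
  set S := {p : AddSubgroup M × Set (↑B.toTop × M) // GoodPair i f p} with hS
  set r : S → S → Prop := fun p q => q.1.1 ≤ p.1.1 ∧ q.1.2 ⊆ p.1.2 with hr
  have good_top : GoodPair i f ((⊤ : AddSubgroup M), (univ : Set (↑B.toTop × M))) :=
    ⟨isClosed_univ, isClosed_univ, fun a => mem_univ _, fun b => ⟨0, mem_univ _⟩,
      fun b m m' _ => by simp⟩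
  have hchains : ∀ c : Set S, IsChain r c → ∃ ub, ∀ p ∈ c, r p ub := by
    intro c hc
    rcases c.eq_empty_or_nonempty with rfl | hcne
    · exact ⟨⟨(⊤, univ), good_top⟩, fun p hp => absurd hp (notMem_empty p)⟩
    · haveI : Nonempty c := hcne.to_subtype
      set Ninf : AddSubgroup M := ⨅ p : c, (p : S).1.1 with hNinf
      set Zinf : Set (↑B.toTop × M) := ⋂ p : c, (p : S).1.2 with hZinf
      have hNinfc : IsClosed (Ninf : Set M) := by
        rw [hNinf, AddSubgroup.coe_iInf]
        exact isClosed_iInter fun p => (p : S).2.1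
      have hZinfc : IsClosed Zinf := isClosed_iInter fun p => (p : S).2.2.1
      have hmemNinf : ∀ x, x ∈ Ninf ↔ ∀ p : c, x ∈ (p : S).1.1 := fun x =>
        AddSubgroup.mem_iInf
      have hfmem : ∀ a, (i a, f a) ∈ Zinf := fun a =>
        mem_iInter.mpr fun p => (p : S).2.2.2.1 a
      have hfib : ∀ b, ∃ m, (b, m) ∈ Zinf := by
        intro b
        set t : c → Set M := fun p => {m | (b, m) ∈ (p : S).1.2} with htdef
        have htc : ∀ p, IsClosed (t p) := fun p =>
          (p : S).2.2.1.preimage (Continuous.prodMk_right b)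
        have htn : ∀ p, (t p).Nonempty := fun p => (p : S).2.2.2.2.1 b
        have htdir : Directed (· ⊇ ·) t := by
          intro p q
          rcases eq_or_ne (p : S) (q : S) with hpq | hpq
          · exact ⟨p, subset_rfl, by simp only [htdef, hpq]; exact subset_rfl⟩
          · rcases hc p.2 q.2 (by simpa using hpq) with hle | hle
            · exact ⟨q, fun m hm => hle.2 hm, subset_rfl⟩
            · exact ⟨p, subset_rfl, fun m hm => hle.2 hm⟩
        have := IsCompact.nonempty_iInter_of_directed_nonempty_isCompact_isClosed t htdir htn
          (fun p => (htc p).isCompact) htc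
        obtain ⟨m, hm⟩ := this
        exact ⟨m, mem_iInter.mpr fun p => mem_iInter.mp hm p⟩
      have hcosinf : ∀ b m m', (b, m) ∈ Zinf → ((b, m') ∈ Zinf ↔ m' - m ∈ Ninf) := by
        intro b m m' hm
        rw [hmemNinf]
        constructor
        · intro hm' p
          exact ((p : S).2.2.2.2.2 b m m' (mem_iInter.mp hm p)).mp (mem_iInter.mp hm' p)
        · intro hp
          exact mem_iInter.mpr fun p =>
            ((p : S).2.2.2.2.2 b m m' (mem_iInter.mp hm p)).mpr (hp p)
      refine ⟨⟨(Ninf, Zinf), hNinfc, hZinfc, hfmem, hfib, hcosinf⟩, ?_⟩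
      intro p hp
      exact ⟨iInf_le (fun p : c => (p : S).1.1) ⟨p, hp⟩, iInter_subset (fun p : c => (p : S).1.2) ⟨p, hp⟩⟩
  obtain ⟨⟨⟨N, Z⟩, hgood⟩, hmax⟩ :=
    exists_maximal_of_chains_bounded hchains (fun {a b c} hab hbc => ⟨hbc.1.trans hab.1,
      hbc.2.trans hab.2⟩)
  -- the maximal subgroup is trivial
  have hNle : ∀ U : AddSubgroup M, IsOpen (U : Set M) → N ≤ U := by
    intro U hU
    obtain ⟨Z', hZ'good, hZ'sub⟩ := goodPair_refine i f h N Z hgood U hU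
    have := hmax ⟨(N ⊓ U, Z'), hZ'good⟩ ⟨inf_le_left, hZ'sub⟩
    exact this.1.trans inf_le_right
  have hNbot : N = ⊥ := by
    rw [eq_bot_iff]
    intro x hx
    simp only [AddSubgroup.mem_bot]
    by_contra hxne
    have hopen : IsOpen ({x}ᶜ : Set M) := isOpen_compl_singleton
    have h0 : (0 : M) ∈ ({x}ᶜ : Set M) := by simpa using (Ne.symm hxne)
    obtain ⟨V, hVclopen, h0V, hVsub⟩ := compact_exists_isClopen_in_isOpen hopen h0
    obtain ⟨U, hUsub⟩ :=
      IsTopologicalAddGroup.exist_openAddSubgroup_sub_clopen_nhds_of_zero hVclopen h0V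
    exact hVsub (hUsub (hNle U.toAddSubgroup U.isOpen hx)) rfl
  -- extract the extension
  obtain ⟨-, hZc, hZf, hne, hcos⟩ := hgood
  have huniq : ∀ b m m', (b, m) ∈ Z → (b, m') ∈ Z → m' = m := by
    intro b m m' hm hm'
    have := (hcos b m m' hm).mp hm'
    rw [hNbot, AddSubgroup.mem_bot, sub_eq_zero] at this
    exact this
  choose g hg using hne
  have hgc : Continuous g := by
    rw [continuous_iff_isClosed]
    intro C hC
    have : g ⁻¹' C = Prod.fst '' (Z ∩ univ ×ˢ C) := by
      ext b
      simp only [mem_preimage, mem_image, mem_inter_iff, mem_prod, mem_univ, true_and]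
      constructor
      · intro hb; exact ⟨(b, g b), ⟨hg b, hb⟩, rfl⟩
      · rintro ⟨⟨b', m⟩, ⟨hmZ, hmC⟩, rfl⟩
        rwa [huniq b' (g b') m (hg b') hmZ] at hmC
    rw [this]
    exact proj_closed hZc hC
  refine ⟨⟨g, hgc⟩, ?_⟩
  simp only
  ext a
  exact huniq (i a) (f a) (g (i a)) (hZf a) (hg (i a))
end

section
/- Let i : A → B be a continuous map of profinite spaces and let G be a profinite group. Assume that for every finite group F (with the discrete topology) the restriction map C(B,F) → C(A,F), g ↦ g ∘ i, is surjective. Then the restriction map C(B,G) → C(A,G), g ↦ g ∘ i, is surjective. -/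
set_option linter.unusedSectionVars false
set_option maxHeartbeats 1000000


universe u

open Function

section Aux

variable {G : Type u} [Group G] [TopologicalSpace G] [IsTopologicalGroup G] [CompactSpace G]

/-- The quotient of a topological group by an open subgroup is discrete. -/
lemma discreteTopology_quot (N : Subgroup G) (hN : IsOpen (N : Set G)) :
    DiscreteTopology (G ⧸ N) := by
  apply discreteTopology_iff_isOpen_singleton.mpr
  intro z
  obtain ⟨γ, rfl⟩ := QuotientGroup.mk_surjective z
  rw [← (QuotientGroup.isQuotientMap_mk N).isOpen_preimage]
  have : (QuotientGroup.mk : G → G ⧸ N) ⁻¹' {(γ : G ⧸ N)} =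
      (fun g => γ⁻¹ * g) ⁻¹' (N : Set G) := by
    ext g
    simp only [Set.mem_preimage, Set.mem_singleton_iff, SetLike.mem_coe]
    constructor
    · intro hgγ
      exact QuotientGroup.eq.mp hgγ.symm
    · intro hm
      exact (QuotientGroup.eq.mpr hm).symm
  rw [this]
  exact hN.preimage (by continuity)

variable [T2Space G] [TotallyDisconnectedSpace G]

/-- In a profinite group, every open neighborhood of `1` contains an open normal subgroup. -/
lemma exists_openNormalSubgroup_sub {U : Set G} (hU : IsOpen U) (h1 : (1 : G) ∈ U) :
    ∃ H : OpenNormalSubgroup G, (H : Set G) ⊆ U := by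
  obtain ⟨W, hW, h1W, hWU⟩ := isTopologicalBasis_isClopen.mem_nhds_iff.mp (hU.mem_nhds h1)
  obtain ⟨H, hH⟩ := IsTopologicalGroup.exist_openNormalSubgroup_sub_clopen_nhds_of_one hW h1W
  exact ⟨H, hH.trans hWU⟩

/-- Separation by open normal subgroups. -/
lemma eq_of_forall_mk_eq {γ γ' : G}
    (hqq : ∀ N : OpenNormalSubgroup G,
      (QuotientGroup.mk γ : G ⧸ N.toSubgroup) = QuotientGroup.mk γ') : γ = γ' := by
  by_contra hne
  have hd : γ⁻¹ * γ' ≠ 1 := fun h => hne (inv_mul_eq_one.mp h)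
  have hU : IsOpen ({γ⁻¹ * γ'}ᶜ : Set G) := isClosed_singleton.isOpen_compl
  have h1 : (1 : G) ∈ ({γ⁻¹ * γ'}ᶜ : Set G) := by
    simpa [Set.mem_compl_iff] using fun h => hd h.symm
  obtain ⟨H, hH⟩ := exists_openNormalSubgroup_sub hU h1
  have : γ⁻¹ * γ' ∈ H.toSubgroup := QuotientGroup.eq.mp (hqq H)
  exact hH this rfl

end Aux

section Main

variable (A B : Profinite.{u}) (i : C(A, B))
  (G : Type u) [Group G] [TopologicalSpace G] [IsTopologicalGroup G]
  [CompactSpace G] [T2Space G] [TotallyDisconnectedSpace G] (f : C(A, G))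

/-- A partial lift of `f` along `i`, defined on a set `T` of open normal subgroups of `G`:
a coherent family of continuous maps `B → G ⧸ N` for `N ∈ T` extending `f` mod `N`. -/
structure PartialLift where
  T : Set (OpenNormalSubgroup G)
  σ : ∀ N : OpenNormalSubgroup G, B → G ⧸ N.toSubgroup
  cont : ∀ N ∈ T, Continuous (σ N)
  comp : ∀ N ∈ T, ∀ a : A, σ N (i a) = QuotientGroup.mk (f a)
  coh : ∀ b : B, ∃ γ : G, ∀ N ∈ T, σ N b = QuotientGroup.mk γ

instance : Preorder (PartialLift A B i G f) where
  le x y := x.T ⊆ y.T ∧ ∀ N ∈ x.T, x.σ N = y.σ N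
  le_refl x := ⟨subset_rfl, fun _ _ => rfl⟩
  le_trans x y z hxy hyz :=
    ⟨hxy.1.trans hyz.1, fun N hN => (hxy.2 N hN).trans (hyz.2 N (hxy.1 hN))⟩


variable {A B i G f}

/-- Every chain of partial lifts has an upper bound. -/
lemma PartialLift.chain_bddAbove (c : Set (PartialLift A B i G f))
    (hc : IsChain (· ≤ ·) c) : BddAbove c := by
  classical
  rcases c.eq_empty_or_nonempty with rfl | hne
  · exact ⟨⟨∅, fun N _ => (1 : G ⧸ N.toSubgroup), by simp, by simp, fun b => ⟨1, by simp⟩⟩,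
      by simp [upperBounds]⟩
  -- the union of the domains
  set Tu : Set (OpenNormalSubgroup G) := ⋃ x ∈ c, x.T with hTu
  -- the combined family
  set σu : ∀ N : OpenNormalSubgroup G, B → G ⧸ N.toSubgroup := fun N =>
    if h : ∃ x ∈ c, N ∈ x.T then h.choose.σ N else fun _ => (1 : G ⧸ N.toSubgroup) with hσu
  -- agreement of the combined family with each member of the chain
  have agree : ∀ x ∈ c, ∀ N ∈ x.T, σu N = x.σ N := by
    intro x hx N hN
    have hex : ∃ y ∈ c, N ∈ y.T := ⟨x, hx, hN⟩
    have h1 := hex.choose_spec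
    simp only [hσu, dif_pos hex]
    rcases eq_or_ne hex.choose x with he | he
    · rw [he]
    · rcases hc h1.1 hx he with hle | hle
      · exact hle.2 N h1.2
      · exact (hle.2 N hN).symm
  have exmem : ∀ N ∈ Tu, ∃ x ∈ c, N ∈ x.T := by
    intro N hN
    simpa [hTu] using hN
  -- finite subsets of `Tu` are contained in the domain of a single chain member
  have findom : ∀ t : Finset (OpenNormalSubgroup G), ∃ x ∈ c, ∀ N ∈ t, N ∈ Tu → N ∈ x.T := by
    intro t
    induction t using Finset.induction_on with
    | empty => exact ⟨hne.choose, hne.choose_spec, by simp⟩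
    | @insert N t hNt ih =>
      obtain ⟨x, hx, hxt⟩ := ih
      by_cases hN : N ∈ Tu
      · obtain ⟨y, hy, hyN⟩ := exmem N hN
        rcases eq_or_ne x y with rfl | hxy
        · exact ⟨x, hx, fun M hM hMu => by
            rcases Finset.mem_insert.mp hM with rfl | hM
            · exact hyN
            · exact hxt M hM hMu⟩
        · rcases hc hx hy hxy with hle | hle
          · exact ⟨y, hy, fun M hM hMu => by
              rcases Finset.mem_insert.mp hM with rfl | hM
              · exact hyN
              · exact hle.1 (hxt M hM hMu)⟩
          · exact ⟨x, hx, fun M hM hMu => by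
              rcases Finset.mem_insert.mp hM with rfl | hM
              · exact hle.1 hyN
              · exact hxt M hM hMu⟩
      · exact ⟨x, hx, fun M hM hMu => by
          rcases Finset.mem_insert.mp hM with rfl | hM
          · exact absurd hMu hN
          · exact hxt M hM hMu⟩
  -- coherence of the combined family, by compactness
  have coh : ∀ b : B, ∃ γ : G, ∀ N ∈ Tu, σu N b = QuotientGroup.mk γ := by
    intro b
    set K : OpenNormalSubgroup G → Set G := fun N =>
      if N ∈ Tu then {γ : G | σu N b = QuotientGroup.mk γ} else Set.univ with hK
    have hKclosed : ∀ N, IsClosed (K N) := by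
      intro N
      simp only [hK]
      split_ifs with hN
      · haveI : DiscreteTopology (G ⧸ N.toSubgroup) :=
          discreteTopology_quot _ N.toOpenSubgroup.isOpen
        have : {γ : G | σu N b = QuotientGroup.mk γ} =
            (QuotientGroup.mk : G → G ⧸ N.toSubgroup) ⁻¹' {σu N b} := by
          ext γ; simp [eq_comm]
        rw [this]
        exact (isClosed_discrete _).preimage QuotientGroup.continuous_mk
      · exact isClosed_univ
    have hfin : ∀ t : Finset (OpenNormalSubgroup G), (⋂ N ∈ t, K N).Nonempty := by
      intro t
      obtain ⟨x, hx, hxt⟩ := findom t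
      obtain ⟨γ, hγ⟩ := x.coh b
      refine ⟨γ, ?_⟩
      simp only [Set.mem_iInter]
      intro N hN
      simp only [hK]
      split_ifs with hNu
      · have := hxt N hN hNu
        simpa [agree x hx N this] using hγ N this
      · trivial
    have hint : (⋂ N, K N).Nonempty := by
      by_contra hemp
      rw [Set.not_nonempty_iff_eq_empty] at hemp
      obtain ⟨t, ht⟩ := IsCompact.elim_finite_subfamily_closed isCompact_univ K hKclosed
        (by rw [hemp]; simp)
      obtain ⟨γ, hγ⟩ := hfin t
      have hmem : γ ∈ (Set.univ : Set G) ∩ ⋂ N ∈ t, K N := ⟨trivial, hγ⟩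
      rw [ht] at hmem
      exact hmem
    obtain ⟨γ, hγ⟩ := hint
    refine ⟨γ, fun N hN => ?_⟩
    have := Set.mem_iInter.mp hγ N
    simpa [hK, if_pos hN] using this
  refine ⟨⟨Tu, σu, ?_, ?_, coh⟩, ?_⟩
  · intro N hN
    obtain ⟨x, hx, hxN⟩ := exmem N hN
    rw [agree x hx N hxN]
    exact x.cont N hxN
  · intro N hN a
    obtain ⟨x, hx, hxN⟩ := exmem N hN
    rw [agree x hx N hxN]
    exact x.comp N hxN a
  · intro x hx
    exact ⟨fun N hN => Set.mem_biUnion hx hN, fun N hN => (agree x hx N hN).symm⟩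


/-- The successor step: a partial lift can be extended to any additional open normal subgroup. -/
lemma PartialLift.step
    (h : ∀ (F : Type u) [Group F] [Fintype F] [TopologicalSpace F] [DiscreteTopology F],
      Function.Surjective (fun g : C(B, F) => g.comp i))
    (x : PartialLift A B i G f) (N₀ : OpenNormalSubgroup G) (hN₀ : N₀ ∉ x.T) :
    ∃ y : PartialLift A B i G f, x ≤ y ∧ N₀ ∈ y.T := by
  classical
  haveI discF : DiscreteTopology (G ⧸ N₀.toSubgroup) :=
    discreteTopology_quot _ N₀.toOpenSubgroup.isOpen
  set F := G ⧸ N₀.toSubgroup with hF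
  set M : Subgroup G := ⨅ N ∈ x.T, N.toSubgroup with hM
  set Q : Subgroup F := M.map (QuotientGroup.mk' N₀.toSubgroup) with hQ
  have memM : ∀ {γ : G}, γ ∈ M ↔ ∀ N ∈ x.T, γ ∈ N.toSubgroup := by
    intro γ; simp [hM, Subgroup.mem_iInf]
  have wd : ∀ (γ γ' : G) (b : B), (∀ N ∈ x.T, x.σ N b = QuotientGroup.mk γ) →
      (∀ N ∈ x.T, x.σ N b = QuotientGroup.mk γ') →
      (QuotientGroup.mk (QuotientGroup.mk γ : F) : F ⧸ Q) =
        QuotientGroup.mk (QuotientGroup.mk γ') := by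
    intro γ γ' b h1 h2
    apply QuotientGroup.eq.mpr
    have hmem : γ⁻¹ * γ' ∈ M :=
      memM.mpr (fun N hN => QuotientGroup.eq.mp ((h1 N hN).symm.trans (h2 N hN)))
    exact Subgroup.mem_map.mpr ⟨γ⁻¹ * γ', hmem, by rw [map_mul, map_inv]; rfl⟩
  set cmap : B → F ⧸ Q := fun b => QuotientGroup.mk (QuotientGroup.mk (x.coh b).choose) with hcmap
  have cspec : ∀ b : B, ∀ N ∈ x.T, x.σ N b = QuotientGroup.mk (x.coh b).choose :=
    fun b => (x.coh b).choose_spec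
  have cval : ∀ (b : B) (γ : G), (∀ N ∈ x.T, x.σ N b = QuotientGroup.mk γ) →
      cmap b = QuotientGroup.mk (QuotientGroup.mk γ : F) :=
    fun b γ hγ => wd _ γ b (cspec b) hγ
  haveI discFQ : DiscreteTopology (F ⧸ Q) := by
    apply discreteTopology_iff_isOpen_singleton.mpr
    intro z
    rw [← (QuotientGroup.isQuotientMap_mk Q).isOpen_preimage]
    exact isOpen_discrete _
  haveI : Finite F := finite_of_compact_of_discrete
  have hcl : ∀ z : F ⧸ Q, IsClosed (cmap ⁻¹' {z}) := by
    intro z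
    have himg : cmap ⁻¹' {z} = Prod.fst '' {p : B × G |
        (∀ N ∈ x.T, x.σ N p.1 = QuotientGroup.mk p.2) ∧
        (QuotientGroup.mk (QuotientGroup.mk p.2 : F) : F ⧸ Q) = z} := by
      ext b
      simp only [Set.mem_preimage, Set.mem_singleton_iff, Set.mem_image]
      constructor
      · intro hb
        exact ⟨(b, (x.coh b).choose), ⟨cspec b, hb⟩, rfl⟩
      · rintro ⟨⟨b', γ⟩, ⟨h1, h2⟩, rfl⟩
        rw [cval _ γ h1]
        exact h2
    rw [himg]
    have hS1 : IsClosed {p : B × G | ∀ N ∈ x.T, x.σ N p.1 = QuotientGroup.mk p.2} := by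
      have hrw : {p : B × G | ∀ N ∈ x.T, x.σ N p.1 = QuotientGroup.mk p.2} =
          ⋂ (N : OpenNormalSubgroup G), ⋂ (_ : N ∈ x.T),
            {p : B × G | x.σ N p.1 = QuotientGroup.mk p.2} := by
        ext p; simp
      rw [hrw]
      refine isClosed_iInter (fun N => isClosed_iInter (fun hN => ?_))
      haveI : DiscreteTopology (G ⧸ N.toSubgroup) :=
        discreteTopology_quot _ N.toOpenSubgroup.isOpen
      exact isClosed_eq ((x.cont N hN).comp continuous_fst)
        (QuotientGroup.continuous_mk.comp continuous_snd)
    have hS2 : IsClosed {p : B × G |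
        (QuotientGroup.mk (QuotientGroup.mk p.2 : F) : F ⧸ Q) = z} := by
      have hrw : {p : B × G | (QuotientGroup.mk (QuotientGroup.mk p.2 : F) : F ⧸ Q) = z} =
          (fun p : B × G => (QuotientGroup.mk (QuotientGroup.mk p.2 : F) : F ⧸ Q)) ⁻¹' {z} := by
        ext p; simp
      rw [hrw]
      exact IsClosed.preimage
        (QuotientGroup.continuous_mk.comp (QuotientGroup.continuous_mk.comp continuous_snd))
        isClosed_singleton
    have hS : IsClosed {p : B × G |
        (∀ N ∈ x.T, x.σ N p.1 = QuotientGroup.mk p.2) ∧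
        (QuotientGroup.mk (QuotientGroup.mk p.2 : F) : F ⧸ Q) = z} := by
      rw [Set.setOf_and]
      exact hS1.inter hS2
    exact (hS.isCompact.image continuous_fst).isClosed
  have c_cont : Continuous cmap := by
    rw [continuous_discrete_rng]
    intro z
    rw [← compl_compl (cmap ⁻¹' {z})]
    apply isOpen_compl_iff.mpr
    have : (cmap ⁻¹' {z})ᶜ = ⋃ z' ∈ ({z}ᶜ : Set (F ⧸ Q)), cmap ⁻¹' {z'} := by
      ext b; simp [eq_comm]
    rw [this]
    exact (Set.toFinite _).isClosed_biUnion (fun z' _ => hcl z')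
  have c_i : ∀ a : A, cmap (i a) = QuotientGroup.mk (QuotientGroup.mk (f a) : F) :=
    fun a => cval _ (f a) (fun N hN => x.comp N hN a)
  set τ₀ : B → F := fun b => (cmap b).out with hτ₀
  have τ₀_cont : Continuous τ₀ := continuous_of_discreteTopology.comp c_cont
  have τ₀_mk : ∀ b, (QuotientGroup.mk (τ₀ b) : F ⧸ Q) = cmap b :=
    fun b => QuotientGroup.out_eq' _
  have qmem : ∀ a : A, (τ₀ (i a))⁻¹ * QuotientGroup.mk (f a) ∈ Q := by
    intro a
    apply QuotientGroup.eq.mp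
    rw [τ₀_mk (i a), c_i a]
  set qfun : A → ↥Q := fun a => ⟨_, qmem a⟩ with hqfun
  have q_cont : Continuous qfun := by
    apply Continuous.subtype_mk
    have h2 : Continuous fun a : A => ((τ₀ (i a), (QuotientGroup.mk (f a) : F)) : F × F) :=
      (τ₀_cont.comp i.continuous).prodMk (QuotientGroup.continuous_mk.comp f.continuous)
    exact (continuous_of_discreteTopology (f := fun p : F × F => p.1⁻¹ * p.2)).comp h2
  haveI : Fintype ↥Q := Fintype.ofFinite _
  obtain ⟨r, hr⟩ := h ↥Q ⟨qfun, q_cont⟩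
  have hra : ∀ a : A, r (i a) = qfun a := fun a => DFunLike.congr_fun hr a
  set τ : B → F := fun b => τ₀ b * (r b : F) with hτ
  have τ_cont : Continuous τ := by
    have h2 : Continuous fun b : B => ((τ₀ b, (r b : F)) : F × F) :=
      τ₀_cont.prodMk (continuous_subtype_val.comp r.continuous)
    exact (continuous_of_discreteTopology (f := fun p : F × F => p.1 * p.2)).comp h2
  have τ_mk : ∀ b, (QuotientGroup.mk (τ b) : F ⧸ Q) = cmap b := by
    intro b
    show (QuotientGroup.mk (τ₀ b * ((r b : F))) : F ⧸ Q) = cmap b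
    rw [QuotientGroup.mk_mul_of_mem _ (r b).2, τ₀_mk]
  have τ_i : ∀ a : A, τ (i a) = QuotientGroup.mk (f a) := by
    intro a
    have h1 : τ (i a) = τ₀ (i a) * ((τ₀ (i a))⁻¹ * QuotientGroup.mk (f a)) := by
      show τ₀ (i a) * ((r (i a) : F)) = _
      rw [hra a]
    rw [h1, mul_inv_cancel_left]
  refine ⟨⟨insert N₀ x.T, Function.update x.σ N₀ τ, ?_, ?_, ?_⟩,
    ⟨Set.subset_insert _ _, fun N hN =>
      (Function.update_of_ne (fun (e : N = N₀) => hN₀ (e ▸ hN)) _ _).symm⟩,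
    Set.mem_insert _ _⟩
  · intro N hN
    rcases Set.mem_insert_iff.mp hN with rfl | hN
    · rw [Function.update_self]; exact τ_cont
    · rw [Function.update_of_ne (fun (e : N = N₀) => hN₀ (e ▸ hN))]; exact x.cont N hN
  · intro N hN a
    rcases Set.mem_insert_iff.mp hN with rfl | hN
    · rw [Function.update_self]; exact τ_i a
    · rw [Function.update_of_ne (fun (e : N = N₀) => hN₀ (e ▸ hN))]; exact x.comp N hN a
  · intro b
    obtain ⟨γ₀, hγ₀⟩ := x.coh b
    have hQmem : (QuotientGroup.mk γ₀ : F)⁻¹ * τ b ∈ Q := by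
      apply QuotientGroup.eq.mp
      rw [τ_mk b, cval b γ₀ hγ₀]
    obtain ⟨m, hmM, hm⟩ := Subgroup.mem_map.mp hQmem
    refine ⟨γ₀ * m, fun N hN => ?_⟩
    rcases Set.mem_insert_iff.mp hN with rfl | hN
    · rw [Function.update_self]
      have hmm : (QuotientGroup.mk (γ₀ * m) : F) = τ b := by
        rw [QuotientGroup.mk_mul,
          show (QuotientGroup.mk m : F) = (QuotientGroup.mk γ₀ : F)⁻¹ * τ b from hm,
          mul_inv_cancel_left]
      exact hmm.symm
    · rw [Function.update_of_ne (fun (e : N = N₀) => hN₀ (e ▸ hN))]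
      have h1 : (QuotientGroup.mk (γ₀ * m) : G ⧸ N.toSubgroup) = QuotientGroup.mk γ₀ := by
        rw [QuotientGroup.mk_mul, (QuotientGroup.eq_one_iff m).mpr (memM.mp hmM N hN), mul_one]
      rw [h1]
      exact hγ₀ N hN

end Main

/-- Let `i : A → B` be a continuous map of profinite spaces and let `G` be a
profinite group. Assume that for every finite group `F` (with the discrete topology) the
restriction map `C(B,F) → C(A,F)`, `g ↦ g ∘ i`, is surjective. Then the restriction map
`C(B,G) → C(A,G)`, `g ↦ g ∘ i`, is surjective. -/
theorem surjective_comp_profinite_group_coefficients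
    (A B : Profinite.{u}) (i : C(A, B))
    (G : Type u) [Group G] [TopologicalSpace G] [IsTopologicalGroup G]
    [CompactSpace G] [T2Space G] [TotallyDisconnectedSpace G]
    (h : ∀ (F : Type u) [Group F] [Fintype F] [TopologicalSpace F] [DiscreteTopology F],
      Function.Surjective (fun g : C(B, F) => g.comp i)) :
    Function.Surjective (fun g : C(B, G) => g.comp i) := by
  intro f
  classical
  -- a maximal partial lift
  obtain ⟨m, hm⟩ := zorn_le
    (fun c hc => PartialLift.chain_bddAbove (A := A) (B := B) (i := i) (G := G) (f := f) c hc)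
  -- it is defined on all open normal subgroups
  have hT : ∀ N : OpenNormalSubgroup G, N ∈ m.T := by
    intro N₀
    by_contra hN₀
    obtain ⟨y, hxy, hNy⟩ := m.step h N₀ hN₀
    exact hN₀ ((hm hxy).1 hNy)
  -- glue to a map `B → G`
  have hgex : ∀ b : B, ∃ γ : G, ∀ N : OpenNormalSubgroup G, m.σ N b = QuotientGroup.mk γ := by
    intro b
    obtain ⟨γ, hγ⟩ := m.coh b
    exact ⟨γ, fun N => hγ N (hT N)⟩
  choose g hg using hgex
  have gcont : Continuous g := by
    rw [continuous_def]
    intro U hU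
    rw [isOpen_iff_forall_mem_open]
    intro b hb
    have h1 : IsOpen ((fun γ : G => g b * γ) ⁻¹' U) := hU.preimage (by continuity)
    have h1m : (1 : G) ∈ (fun γ : G => g b * γ) ⁻¹' U := by
      simpa using hb
    obtain ⟨H, hH⟩ := exists_openNormalSubgroup_sub h1 h1m
    refine ⟨(m.σ H) ⁻¹' {QuotientGroup.mk (g b)}, ?_, ?_, ?_⟩
    · intro b' hb'
      have h2 : (QuotientGroup.mk (g b') : G ⧸ H.toSubgroup) = QuotientGroup.mk (g b) := by
        rw [← hg b' H]
        exact hb'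
      have h3 : (g b)⁻¹ * g b' ∈ H.toSubgroup := QuotientGroup.eq.mp h2.symm
      have h4 := hH h3
      have h5 : g b * ((g b)⁻¹ * g b') ∈ U := h4
      rwa [mul_inv_cancel_left] at h5
    · haveI := discreteTopology_quot H.toSubgroup H.toOpenSubgroup.isOpen
      exact IsOpen.preimage (m.cont H (hT H)) (isOpen_discrete _)
    · exact hg b H
  have hgi : ∀ a : A, g (i a) = f a := by
    intro a
    apply eq_of_forall_mk_eq (G := G)
    intro N
    rw [← hg (i a) N]
    exact m.comp N (hT N) a
  exact ⟨⟨g, gcont⟩, ContinuousMap.ext hgi⟩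
end

section
/- Let G be a profinite group and let EG be the simplicial profinite set whose space of n-simplices is G^{n+1}, namely the Čech nerve in Profinite of the unique map from G to the terminal object. Then the unique map EG → * to the terminal simplicial profinite set has the right lifting property with respect to all monomorphisms of simplicial profinite sets. -/
universe u

open CategoryTheory Limits

section Auxiliary


open Set

section Sep
variable {X : Type*} [TopologicalSpace X] [CompactSpace X] [T2Space X]
  [TotallyDisconnectedSpace X]

lemma my_exists_isClopen_point {t : Set X} (ht : IsClosed t) {x : X} (hx : x ∉ t) :
    ∃ U : Set X, IsClopen U ∧ x ∈ U ∧ Disjoint U t := by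
  haveI : TotallySeparatedSpace X := loc_compact_t2_tot_disc_iff_tot_sep.mp ‹_›
  have key : ∀ y ∈ t, ∃ V : Set X, IsClopen V ∧ y ∈ V ∧ x ∈ Vᶜ := by
    intro y hy
    exact exists_isClopen_of_totally_separated (fun h => hx (h ▸ hy))
  choose! V hV hyV hxV using key
  obtain ⟨b, hbt, hbfin, hcov⟩ :=
    ht.isCompact.elim_finite_subcover_image (fun y hy => (hV y hy).2) (fun y hy => mem_biUnion hy (hyV y hy))
  refine ⟨(⋃ y ∈ b, V y)ᶜ, (hbfin.isClopen_biUnion (fun y hy => hV y (hbt hy))).compl, ?_, ?_⟩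
  · simp only [mem_compl_iff, mem_iUnion, not_exists]
    exact fun y hy hxy => hxV y (hbt hy) hxy
  · exact disjoint_compl_left_iff_subset.mpr hcov

lemma my_exists_isClopen_sep {s t : Set X} (hs : IsClosed s) (ht : IsClosed t)
    (hst : Disjoint s t) : ∃ U : Set X, IsClopen U ∧ s ⊆ U ∧ Disjoint U t := by
  have key : ∀ x ∈ s, ∃ U : Set X, IsClopen U ∧ x ∈ U ∧ Disjoint U t := fun x hx =>
    my_exists_isClopen_point ht (disjoint_left.mp hst hx)
  choose! U hU hxU hUt using key
  obtain ⟨b, hbs, hbfin, hcov⟩ :=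
    hs.isCompact.elim_finite_subcover_image (fun x hx => (hU x hx).2) (fun x hx => mem_biUnion hx (hxU x hx))
  refine ⟨⋃ x ∈ b, U x, hbfin.isClopen_biUnion (fun x hx => hU x (hbs hx)), hcov, ?_⟩
  exact disjoint_left.mpr fun z hz => by
    obtain ⟨x, hx, hzx⟩ := mem_iUnion₂.mp hz
    exact disjoint_left.mp (hUt x (hbs hx)) hzx

end Sep

open Set

section Sel
variable {X : Type*} [TopologicalSpace X] [CompactSpace X] [T2Space X]
  [TotallyDisconnectedSpace X]

/-- Selection lemma. -/
lemma my_selection {ι : Type*} [Finite ι] (F : ι → Set X)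
    (hFcl : ∀ i, IsClosed (F i)) (hFd : Pairwise (Function.onFun Disjoint F))
    (T : X → Set ι) (hTne : ∀ x, (T x).Nonempty)
    (hTlc : IsLocallyConstant T)
    (hcompat : ∀ i, ∀ x ∈ F i, i ∈ T x) :
    ∃ c : X → ι, IsLocallyConstant c ∧ (∀ x, c x ∈ T x) ∧ ∀ i, ∀ x ∈ F i, c x = i := by
  classical
  haveI := Fintype.ofFinite ι
  rcases isEmpty_or_nonempty X with hX | hX
  · exact ⟨fun x => (IsEmpty.false x).elim, fun s => by
      convert isOpen_empty; exact eq_empty_of_isEmpty _,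
      fun x => (IsEmpty.false x).elim, fun i x hx => ((IsEmpty.false x).elim)⟩
  haveI : Nonempty ι := ⟨(hTne (Classical.arbitrary X)).choose⟩
  -- clopen neighborhoods of the constraint sets
  have key : ∀ i : ι, ∃ V : Set X, IsClopen V ∧ F i ⊆ V ∧ Disjoint V (⋃ j ∈ ({i}ᶜ : Set ι), F j) := by
    intro i
    refine my_exists_isClopen_sep (hFcl i) ((Set.toFinite _).isClosed_biUnion (fun j _ => hFcl j)) ?_
    refine Set.disjoint_left.mpr fun x hx hx' => ?_
    obtain ⟨j, hj, hxj⟩ := mem_iUnion₂.mp hx'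
    exact Set.disjoint_left.mp (hFd (Ne.symm hj)) hx hxj
  choose V hVclopen hFV hVd using key
  -- the "pattern" map
  let E : X → Set ι := fun x => {j | x ∈ V j}
  have hElc : IsLocallyConstant E := by
    rw [IsLocallyConstant.iff_exists_open]
    intro x
    refine ⟨(⋂ j ∈ E x, V j) ∩ (⋂ j ∈ (E x)ᶜ, (V j)ᶜ), ?_, ?_, ?_⟩
    · exact IsOpen.inter ((Set.toFinite _).isOpen_biInter (fun j _ => (hVclopen j).2))
        ((Set.toFinite _).isOpen_biInter (fun j _ => (hVclopen j).compl.2))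
    · exact ⟨mem_iInter₂.mpr fun j hj => hj, mem_iInter₂.mpr fun j hj => hj⟩
    · rintro y ⟨hy1, hy2⟩
      ext j
      constructor
      · intro hyj
        by_contra hj
        exact (mem_iInter₂.mp hy2 j hj) hyj
      · intro hj
        exact mem_iInter₂.mp hy1 j hj
  let pick : Set ι → Set ι → ι := fun Ex Sx =>
    if h : (Ex ∩ Sx).Nonempty then h.choose
    else if h' : Sx.Nonempty then h'.choose
    else Classical.arbitrary ι
  refine ⟨fun x => pick (E x) (T x), hElc.comp₂ hTlc pick, fun x => ?_, fun i x hx => ?_⟩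
  · by_cases h : (E x ∩ T x).Nonempty
    · simp only [pick, dif_pos h]
      exact (h.choose_spec).2
    · simp only [pick, dif_neg h, dif_pos (hTne x)]
      exact (hTne x).choose_spec
  · have hsingle : E x ∩ T x = {i} := by
      apply Subset.antisymm
      · rintro j ⟨hjE, _⟩
        simp only [mem_singleton_iff]
        by_contra hji
        have hmem : i ∈ ({j}ᶜ : Set ι) := by simp; exact fun h => hji h.symm
        exact Set.disjoint_left.mp (hVd j) hjE (mem_biUnion hmem hx)
      · intro j hj
        rw [mem_singleton_iff] at hj
        subst hj
        exact ⟨hFV _ hx, hcompat _ x hx⟩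
    have h : (E x ∩ T x).Nonempty := by rw [hsingle]; exact ⟨i, rfl⟩
    simp only [pick, dif_pos h]
    exact mem_singleton_iff.mp (hsingle.subset h.choose_spec)

end Sel

open Set

section Main

variable {B : Type*} [TopologicalSpace B] [CompactSpace B] [T2Space B]
  [TotallyDisconnectedSpace B]
  {G : Type*} [TopologicalSpace G] [CompactSpace G] [T2Space G]
  [TotallyDisconnectedSpace G] [Group G] [IsTopologicalGroup G]
  {A : Type*} [TopologicalSpace A] [CompactSpace A]

theorem my_extension (j : A → B) (hj : Continuous j) (hjinj : Function.Injective j)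
    (f : A → G) (hf : Continuous f) :
    ∃ g : B → G, Continuous g ∧ ∀ a, g (j a) = f a := by
  classical
  haveI : TotallySeparatedSpace G := loc_compact_t2_tot_disc_iff_tot_sep.mp ‹_›
  set P : Set ((Subgroup G × Set (B × G))ᵒᵈ) :=
    {p | IsClosed (((OrderDual.ofDual p).1 : Subgroup G) : Set G) ∧
      IsClosed (OrderDual.ofDual p).2 ∧
      (∀ b : B, ∃ x : G, {y : G | (b, y) ∈ (OrderDual.ofDual p).2} =
        {y : G | x⁻¹ * y ∈ (OrderDual.ofDual p).1}) ∧
      ∀ a : A, (j a, f a) ∈ (OrderDual.ofDual p).2} with hPdef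
  have hPtop : OrderDual.toDual ((⊤ : Subgroup G), (Set.univ : Set (B × G))) ∈ P := by
    refine ⟨?_, isClosed_univ, fun b => ⟨1, by ext y; simp⟩, fun a => trivial⟩
    · show IsClosed ((⊤ : Subgroup G) : Set G)
      rw [Subgroup.coe_top]
      exact isClosed_univ
  obtain ⟨m, hmP, hmmax⟩ : ∃ m, Maximal (· ∈ P) m := by
    apply zorn_le₀
    intro c hcP hchain
    rcases c.eq_empty_or_nonempty with rfl | hcne
    · exact ⟨_, hPtop, fun z hz => absurd hz (Set.notMem_empty z)⟩
    haveI : Nonempty ↑c := hcne.to_subtype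
    set N : Subgroup G := ⨅ (p : (Subgroup G × Set (B × G))ᵒᵈ) (_ : p ∈ c),
      (OrderDual.ofDual p).1 with hNdef
    set Γ : Set (B × G) := ⋂ (p : (Subgroup G × Set (B × G))ᵒᵈ) (_ : p ∈ c),
      (OrderDual.ofDual p).2 with hΓdef
    have hNmem : ∀ {y : G}, y ∈ N ↔ ∀ p ∈ c, y ∈ (OrderDual.ofDual p).1 := by
      intro y
      simp [hNdef, Subgroup.mem_iInf]
    refine ⟨OrderDual.toDual (N, Γ), ⟨?_, ?_, ?_, ?_⟩, ?_⟩
    · show IsClosed ((N : Subgroup G) : Set G)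
      have : ((N : Subgroup G) : Set G) =
          ⋂ (p : (Subgroup G × Set (B × G))ᵒᵈ) (_ : p ∈ c), (((OrderDual.ofDual p).1 : Subgroup G) : Set G) := by
        ext y
        simpa [Set.mem_iInter] using hNmem (y := y)
      rw [this]
      exact isClosed_iInter fun p => isClosed_iInter fun hp => (hcP hp).1
    · exact isClosed_iInter fun p => isClosed_iInter fun hp => (hcP hp).2.1
    · intro b
      show ∃ x : G, {y : G | (b, y) ∈ Γ} = {y : G | x⁻¹ * y ∈ N}
      set K : ↑c → Set G := fun p => {y : G | (b, y) ∈ (OrderDual.ofDual p.1).2} with hKdef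
      have hKcoset : ∀ p : ↑c, ∃ x : G, K p = {y : G | x⁻¹ * y ∈ (OrderDual.ofDual p.1).1} :=
        fun p => (hcP p.2).2.2.1 b
      have hKne : ∀ p : ↑c, (K p).Nonempty := fun p => by
        obtain ⟨x, hx⟩ := hKcoset p
        refine ⟨x, by rw [hx]; simpa using Subgroup.one_mem _⟩
      have hKcl : ∀ p : ↑c, IsClosed (K p) := fun p =>
        (hcP p.2).2.1.preimage (Continuous.prodMk_right b)
      have hKdir : Directed (· ⊇ ·) K := by
        intro p q
        rcases hchain.total p.2 q.2 with h | h
        · exact ⟨q, fun y hy => h.2 hy, fun y hy => hy⟩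
        · exact ⟨p, fun y hy => hy, fun y hy => h.2 hy⟩
      obtain ⟨x, hx⟩ := IsCompact.nonempty_iInter_of_directed_nonempty_isCompact_isClosed
        K hKdir hKne (fun p => (hKcl p).isCompact) hKcl
      have hxK : ∀ p : ↑c, x ∈ K p := fun p => Set.mem_iInter.mp hx p
      refine ⟨x, ?_⟩
      ext y
      simp only [Set.mem_setOf_eq]
      have hmemΓ : (b, y) ∈ Γ ↔ ∀ p ∈ c, (b, y) ∈ (OrderDual.ofDual p).2 := by
        simp [hΓdef, Set.mem_iInter]
      rw [hmemΓ, hNmem]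
      constructor
      · intro h
        intro p hp
        obtain ⟨xp, hxp⟩ := hKcoset ⟨p, hp⟩
        have h1 : xp⁻¹ * x ∈ (OrderDual.ofDual p).1 := by
          have := hxK ⟨p, hp⟩; rw [hxp] at this; exact this
        have h2 : xp⁻¹ * y ∈ (OrderDual.ofDual p).1 := by
          have : y ∈ K ⟨p, hp⟩ := h p hp
          rw [hxp] at this; exact this
        have : (xp⁻¹ * x)⁻¹ * (xp⁻¹ * y) ∈ (OrderDual.ofDual p).1 :=
          Subgroup.mul_mem _ (Subgroup.inv_mem _ h1) h2
        simpa [mul_assoc] using this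
      · intro h p hp
        obtain ⟨xp, hxp⟩ := hKcoset ⟨p, hp⟩
        have h1 : xp⁻¹ * x ∈ (OrderDual.ofDual p).1 := by
          have := hxK ⟨p, hp⟩; rw [hxp] at this; exact this
        have h2 : (xp⁻¹ * x) * (x⁻¹ * y) ∈ (OrderDual.ofDual p).1 :=
          Subgroup.mul_mem _ h1 (h p hp)
        have hy : y ∈ K ⟨p, hp⟩ := by
          rw [hxp]
          simpa [mul_assoc] using h2
        exact hy
    · intro a
      exact Set.mem_iInter.mpr fun p => Set.mem_iInter.mpr fun hp => (hcP hp).2.2.2 a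
    · intro z hz
      constructor
      · exact iInf₂_le z hz
      · exact Set.biInter_subset_of_mem hz
  obtain ⟨hNcl, hΓcl, hfib, hgraph⟩ := hmP
  set N : Subgroup G := (OrderDual.ofDual m).1 with hNdef
  set Γ : Set (B × G) := (OrderDual.ofDual m).2 with hΓdef
  choose xf hxf using hfib
  have hfibne : ∀ b, xf b ∈ {y : G | (b, y) ∈ Γ} := fun b => by
    rw [hxf b]; simpa using Subgroup.one_mem _
  -- step 1 : N = ⊥
  have hNbot : N = ⊥ := by
    rcases N.bot_or_exists_ne_one with h | ⟨n, hnN, hn1⟩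
    · exact h
    exfalso
    obtain ⟨W, hWclopen, h1W, hnW⟩ :=
      exists_isClopen_of_totally_separated (show (1 : G) ≠ n from Ne.symm hn1)
    obtain ⟨M₀, hM₀W⟩ :=
      IsTopologicalGroup.exist_openSubgroup_sub_clopen_nhds_of_one hWclopen h1W
    set M : Subgroup G := M₀.toSubgroup with hMdef
    have hnM : n ∉ M := fun h => hnW (hM₀W h)
    haveI : Finite (G ⧸ M) := M.quotient_finite_of_isOpen M₀.isOpen
    have hMcl : IsClosed (M : Set G) := M₀.isClosed
    have hcoset : ∀ q : G ⧸ M, IsClopen {y : G | (y : G ⧸ M) = q} := by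
      intro q
      obtain ⟨x₀, rfl⟩ := QuotientGroup.mk_surjective q
      have heq : {y : G | (y : G ⧸ M) = (x₀ : G ⧸ M)} = (fun y : G => y⁻¹ * x₀) ⁻¹' (M : Set G) := by
        ext y
        simp only [Set.mem_setOf_eq, Set.mem_preimage, SetLike.mem_coe]
        exact QuotientGroup.eq
      rw [heq]
      have hcont : Continuous fun y : G => y⁻¹ * x₀ := (continuous_inv).mul continuous_const
      exact ⟨hMcl.preimage hcont, M₀.isOpen.preimage hcont⟩
    set fib : B → Set G := fun b => {y : G | (b, y) ∈ Γ} with hfibdef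
    set T : B → Set (G ⧸ M) := fun b => (fun y : G => (y : G ⧸ M)) '' fib b with hTdef
    have hTne : ∀ b, (T b).Nonempty := fun b => ⟨_, _, hfibne b, rfl⟩
    have hTmem_closed : ∀ q : G ⧸ M, IsClosed {b : B | q ∈ T b} := by
      intro q
      have heq : {b : B | q ∈ T b} = Prod.fst '' (Γ ∩ {p : B × G | ((p.2 : G) : G ⧸ M) = q}) := by
        ext b
        constructor
        · rintro ⟨y, hy, rfl⟩
          exact ⟨(b, y), ⟨hy, rfl⟩, rfl⟩
        · rintro ⟨⟨b', y⟩, ⟨hmem, hq⟩, rfl⟩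
          exact ⟨y, hmem, hq⟩
      rw [heq]
      have hcpt : IsCompact (Γ ∩ {p : B × G | ((p.2 : G) : G ⧸ M) = q}) :=
        hΓcl.isCompact.inter_right ((hcoset q).1.preimage continuous_snd)
      exact (hcpt.image continuous_fst).isClosed
    -- cardinality of T b is independent of b
    have hTcard : ∀ b, (T b).ncard = ((fun y : G => (y : G ⧸ M)) '' (N : Set G)).ncard := by
      intro b
      have hfibim : fib b = (fun y : G => xf b * y) '' (N : Set G) := by
        ext y
        simp only [hfibdef, Set.mem_image, SetLike.mem_coe]
        rw [hxf b]
        constructor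
        · intro hy
          exact ⟨(xf b)⁻¹ * y, hy, by group⟩
        · rintro ⟨z, hz, rfl⟩
          simpa using hz
      have him : T b = (fun q : G ⧸ M => (xf b) • q) '' ((fun y : G => (y : G ⧸ M)) '' (N : Set G)) := by
        rw [hTdef]
        simp only
        rw [hfibim, ← Set.image_comp, ← Set.image_comp]
        apply Set.image_congr
        intro z _
        show ((xf b * z : G) : G ⧸ M) = (xf b) • ((z : G) : G ⧸ M)
        rw [MulAction.Quotient.smul_mk, smul_eq_mul]
      rw [him]
      exact Set.ncard_image_of_injective _ (MulAction.injective (xf b))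
    have hTlc : IsLocallyConstant T := by
      rw [IsLocallyConstant.iff_exists_open]
      intro b
      refine ⟨⋂ q ∈ (T b)ᶜ, {b' : B | q ∈ T b'}ᶜ, ?_, ?_, ?_⟩
      · exact (Set.toFinite _).isOpen_biInter fun q _ => (hTmem_closed q).isOpen_compl
      · exact Set.mem_iInter₂.mpr fun q hq => hq
      · intro y hy
        have hsub : T y ⊆ T b := by
          intro q hqTy
          by_contra hqTb
          exact (Set.mem_iInter₂.mp hy q hqTb) hqTy
        exact Set.eq_of_subset_of_ncard_le hsub
          (le_of_eq ((hTcard b).trans (hTcard y).symm)) (Set.toFinite _)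
    set F : G ⧸ M → Set B := fun q => j '' {a : A | ((f a : G) : G ⧸ M) = q} with hFdef
    have hFcl : ∀ q, IsClosed (F q) := by
      intro q
      have h1 : IsClosed {a : A | ((f a : G) : G ⧸ M) = q} := (hcoset q).1.preimage hf
      exact ((h1.isCompact.image hj)).isClosed
    have hFd : Pairwise (Function.onFun Disjoint F) := by
      intro q q' hqq'
      rw [Function.onFun]
      rw [Set.disjoint_left]
      rintro x ⟨a, ha, rfl⟩ ⟨a', ha', hja⟩
      exact hqq' (ha ▸ (hjinj hja ▸ ha'))
    have hcompat : ∀ q : G ⧸ M, ∀ x ∈ F q, q ∈ T x := by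
      rintro q x ⟨a, ha, rfl⟩
      exact ⟨f a, hgraph a, ha⟩
    obtain ⟨c, hclc, hcT, hcF⟩ := my_selection F hFcl hFd T hTne hTlc hcompat
    set Γ' : Set (B × G) := {p ∈ Γ | ((p.2 : G) : G ⧸ M) = c p.1} with hΓ'def
    have hmem' : OrderDual.toDual ((N ⊓ M : Subgroup G), Γ') ∈ P := by
      refine ⟨?_, ?_, ?_, ?_⟩
      · show IsClosed ((N ⊓ M : Subgroup G) : Set G)
        rw [Subgroup.coe_inf]
        exact hNcl.inter hMcl
      · show IsClosed Γ'
        have heq : Γ' = Γ ∩ ⋃ q : G ⧸ M, (c ⁻¹' {q}) ×ˢ {y : G | (y : G ⧸ M) = q} := by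
          ext ⟨b, y⟩
          simp only [hΓ'def, Set.mem_sep_iff, Set.mem_inter_iff, Set.mem_iUnion, Set.mem_prod,
            Set.mem_preimage, Set.mem_singleton_iff, Set.mem_setOf_eq]
          constructor
          · rintro ⟨h1, h2⟩
            exact ⟨h1, c b, rfl, h2⟩
          · rintro ⟨h1, q, hq1, hq2⟩
            exact ⟨h1, by rw [hq2, hq1]⟩
        rw [heq]
        refine hΓcl.inter (isClosed_iUnion_of_finite fun q => ?_)
        have h1 : IsClosed (c ⁻¹' {q}) := hclc.isClosed_fiber q
        exact h1.prod (hcoset q).1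
      · intro b
        show ∃ x : G, {y : G | (b, y) ∈ Γ'} = {y : G | x⁻¹ * y ∈ (N ⊓ M : Subgroup G)}
        obtain ⟨y₀, hy₀fib, hy₀π⟩ := hcT b
        have hy₀π' : (y₀ : G ⧸ M) = c b := hy₀π
        have hy₀N : (xf b)⁻¹ * y₀ ∈ N := (Set.ext_iff.mp (hxf b) y₀).mp hy₀fib
        refine ⟨y₀, ?_⟩
        ext y
        simp only [hΓ'def, Set.mem_setOf_eq, Set.mem_sep_iff, Subgroup.mem_inf]
        constructor
        · rintro ⟨h1, h2⟩
          have h1' : (xf b)⁻¹ * y ∈ N := (Set.ext_iff.mp (hxf b) y).mp h1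
          constructor
          · have : ((xf b)⁻¹ * y₀)⁻¹ * ((xf b)⁻¹ * y) ∈ N :=
              Subgroup.mul_mem _ (Subgroup.inv_mem _ hy₀N) h1'
            simpa [mul_assoc] using this
          · have : (y₀ : G ⧸ M) = (y : G ⧸ M) := by rw [hy₀π', h2]
            exact QuotientGroup.eq.mp this
        · rintro ⟨h1, h2⟩
          constructor
          · refine (Set.ext_iff.mp (hxf b) y).mpr ?_
            have : ((xf b)⁻¹ * y₀) * (y₀⁻¹ * y) ∈ N := Subgroup.mul_mem _ hy₀N h1
            simpa [mul_assoc] using this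
          · have heq2 : (y₀ : G ⧸ M) = (y : G ⧸ M) := QuotientGroup.eq.mpr h2
            rw [← heq2]
            exact hy₀π'
      · intro a
        refine ⟨hgraph a, ?_⟩
        exact (hcF _ (j a) ⟨a, rfl, rfl⟩).symm
    have hle : m ≤ OrderDual.toDual ((N ⊓ M : Subgroup G), Γ') := by
      constructor
      · exact inf_le_left
      · exact fun p hp => hp.1
    have hge := hmmax hmem' hle
    have hNle : N ≤ N ⊓ M := hge.1
    exact hnM ((hNle hnN).2)
  -- step 2 : conclude
  have hsingle : ∀ b y, (b, y) ∈ Γ ↔ y = xf b := by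
    intro b y
    constructor
    · intro h
      have : (xf b)⁻¹ * y ∈ N := by
        have h2 : y ∈ {y : G | (b, y) ∈ Γ} := h
        rw [hxf b] at h2
        exact h2
      rw [hNbot, Subgroup.mem_bot] at this
      have := inv_mul_eq_one.mp this
      exact this.symm
    · rintro rfl
      exact hfibne b
  refine ⟨xf, ?_, ?_⟩
  · rw [continuous_iff_isClosed]
    intro C hC
    have heq : xf ⁻¹' C = Prod.fst '' (Γ ∩ (Set.univ ×ˢ C)) := by
      ext b
      constructor
      · intro hb
        exact ⟨(b, xf b), ⟨hfibne b, ⟨trivial, hb⟩⟩, rfl⟩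
      · rintro ⟨⟨b', y⟩, ⟨hmem, ⟨-, hyC⟩⟩, rfl⟩
        have hyx : y = xf b' := (hsingle b' y).mp hmem
        show xf b' ∈ C
        rw [← hyx]
        exact hyC
    rw [heq]
    exact ((hΓcl.isCompact.inter_right (isClosed_univ.prod hC)).image continuous_fst).isClosed
  · intro a
    exact ((hsingle (j a) (f a)).mp (hgraph a)).symm

end Main

end Auxiliary

open Simplicial

/-- `EG`, the simplicial profinite set with `(EG)_n = G^{n+1}`: the Čech nerve in `Profinite`
of the unique map from `G` to the terminal object. -/
noncomputable def profiniteEG (G : Profinite.{u}) : SimplicialObject Profinite.{u} :=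
  (Arrow.mk (terminal.from G)).cechNerve


noncomputable def liftToEG (G : Profinite.{u}) (B : SimplicialObject Profinite.{u})
    (g : B.obj (Opposite.op (SimplexCategory.mk 0)) ⟶ G) : B ⟶ profiniteEG G where
  app x := WidePullback.lift (terminal.from _)
    (fun i => B.map (SimplexCategory.const (SimplexCategory.mk 0) x.unop i).op ≫ g)
    (fun i => terminal.hom_ext _ _)
  naturality x y φ := by
    dsimp [profiniteEG]
    apply WidePullback.hom_ext
    · intro i
      simp only [Category.assoc, WidePullback.lift_π]
      rw [← B.map_comp_assoc]
      have hcc : φ ≫ (SimplexCategory.const (SimplexCategory.mk 0) y.unop i).op =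
          (SimplexCategory.const (SimplexCategory.mk 0) x.unop (φ.unop.toOrderHom i)).op :=
        Quiver.Hom.unop_inj (SimplexCategory.const_comp (SimplexCategory.mk 0) φ.unop i)
      rw [hcc]
    · apply terminal.hom_ext

/-- Let `G` be a profinite group and let `EG` be the simplicial profinite set
whose space of `n`-simplices is `G^{n+1}`, namely the Čech nerve in `Profinite` of the unique
map from `G` to the terminal object. Then the unique map `EG → *` to the terminal simplicial
profinite set has the right lifting property with respect to all monomorphisms of simplicial
profinite sets. -/
theorem profiniteEG_rlp_monomorphisms
    (G : Profinite.{u}) [Group G] [IsTopologicalGroup G]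
    (A B : SimplicialObject Profinite.{u}) (j : A ⟶ B) [Mono j] :
    HasLiftingProperty j (terminal.from (profiniteEG G)) := by
  constructor
  intro u v sq
  have hmono : Mono (j.app (Opposite.op (SimplexCategory.mk 0))) := inferInstance
  have hinj := (CompHausLike.mono_iff_injective (j.app (Opposite.op (SimplexCategory.mk 0)))).mp hmono
  let f0 : A.obj (Opposite.op (SimplexCategory.mk 0)) ⟶ G :=
    u.app _ ≫ WidePullback.π (fun _ : Fin 1 => (Arrow.mk (terminal.from G)).hom) (0 : Fin 1)
  obtain ⟨g, hgcont, hgj⟩ := my_extension _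
    (j.app (Opposite.op (SimplexCategory.mk 0))).hom.hom.continuous hinj _ f0.hom.hom.continuous
  let g' : B.obj (Opposite.op (SimplexCategory.mk 0)) ⟶ G := CompHausLike.ofHom _ ⟨g, hgcont⟩
  have hg' : j.app (Opposite.op (SimplexCategory.mk 0)) ≫ g' = f0 := by
    ext a
    exact hgj a
  refine ⟨⟨⟨liftToEG G B g', ?_, terminal.hom_ext _ _⟩⟩⟩
  apply NatTrans.ext
  funext x
  apply WidePullback.hom_ext
  · intro i
    have h1 : (liftToEG G B g').app x ≫
        WidePullback.π (fun _ : Fin (x.unop.len + 1) => (Arrow.mk (terminal.from G)).hom) i =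
        B.map (SimplexCategory.const (SimplexCategory.mk 0) x.unop i).op ≫ g' := by
      dsimp only [liftToEG]
      apply WidePullback.lift_π
    rw [NatTrans.comp_app]; refine (Category.assoc _ _ _).trans ?_
    erw [h1]
    rw [← Category.assoc, ← j.naturality, Category.assoc, hg']
    show A.map (SimplexCategory.const (SimplexCategory.mk 0) x.unop i).op ≫
        (u.app (Opposite.op (SimplexCategory.mk 0)) ≫
          WidePullback.π (fun _ : Fin 1 => (Arrow.mk (terminal.from G)).hom) (0 : Fin 1)) =
        u.app x ≫ WidePullback.π (fun _ : Fin (x.unop.len + 1) => (Arrow.mk (terminal.from G)).hom) i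
    refine (Category.assoc _ _ _).symm.trans ?_; rw [u.naturality]; refine (Category.assoc _ _ _).trans ?_
    congr 1
    show (profiniteEG G).map (SimplexCategory.const (SimplexCategory.mk 0) x.unop i).op ≫
        WidePullback.π (fun _ : Fin 1 => (Arrow.mk (terminal.from G)).hom) (0 : Fin 1) =
        WidePullback.π (fun _ : Fin (x.unop.len + 1) => (Arrow.mk (terminal.from G)).hom) i
    dsimp [profiniteEG]
    refine (WidePullback.lift_π _ _ _ _ _).trans ?_
    rfl
  · apply terminal.hom_ext
end

section
/- Let j : A → B and i : V → W be monomorphisms of simplicial profinite sets. Then the induced pushout-product map (A × W) ⊔_{A × V} (B × V) → B × W is a monomorphism of simplicial profinite sets. -/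
universe u

open CategoryTheory Limits

attribute [local instance] CategoryTheory.ConcreteCategory.instFunLike

namespace PPAux

noncomputable abbrev Ev (n : SimplexCategoryᵒᵖ) :=
  (evaluation SimplexCategoryᵒᵖ Profinite.{u}).obj n

noncomputable abbrev G (n : SimplexCategoryᵒᵖ) : SimplicialObject Profinite.{u} ⥤ Type u :=
  Ev n ⋙ forget Profinite

lemma app_injective {X Y : SimplicialObject Profinite.{u}} (h : X ⟶ Y) [Mono h]
    (n : SimplexCategoryᵒᵖ) : Function.Injective (h.app n) := by
  haveI : PreservesLimitsOfShape WalkingCospan (Ev.{u} n) := inferInstance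
  haveI : Mono ((Ev.{u} n).map h) := (Ev.{u} n).map_mono h
  exact ConcreteCategory.injective_of_mono_of_preservesPullback ((Ev.{u} n).map h)

lemma comp_app_apply {X Y Z : SimplicialObject Profinite.{u}} (h : X ⟶ Y) (k : Y ⟶ Z)
    (n : SimplexCategoryᵒᵖ) (x : (forget Profinite).obj (X.obj n)) :
    k.app n (h.app n x) = (h ≫ k).app n x := by
  rw [NatTrans.comp_app]
  exact (comp_apply _ _ _).symm

lemma eq_app_apply {X Y Z X' : SimplicialObject Profinite.{u}} {h₁ : X ⟶ Y} {k₁ : Y ⟶ Z}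
    {h₂ : X ⟶ X'} {k₂ : X' ⟶ Z} (E : h₁ ≫ k₁ = h₂ ≫ k₂) (n : SimplexCategoryᵒᵖ)
    (x : (forget Profinite).obj (X.obj n)) :
    k₁.app n (h₁.app n x) = k₂.app n (h₂.app n x) := by
  rw [comp_app_apply, comp_app_apply, E]

lemma prod_bij (X Y : SimplicialObject Profinite.{u}) (n : SimplexCategoryᵒᵖ) :
    Function.Bijective (fun z : (forget Profinite).obj ((X ⨯ Y).obj n) =>
      (((prod.fst : X ⨯ Y ⟶ X).app n) z, ((prod.snd : X ⨯ Y ⟶ Y).app n) z)) := by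
  haveI h0 : PreservesLimitsOfSize.{0,0} (forget Profinite.{u}) := preservesLimitsOfSize_shrink _
  haveI h2 : PreservesLimit (pair X Y) (Ev.{u} n) := evaluation_preservesLimit _ _
  haveI h3 : PreservesLimit (pair X Y) (G.{u} n) := comp_preservesLimit _ _
  have h1 := (isIso_iff_bijective (prodComparison (G.{u} n) X Y ≫
      (Types.binaryProductIso ((G.{u} n).obj X) ((G.{u} n).obj Y)).hom)).mp inferInstance
  convert h1 using 1
  · rfl
  · rfl
  funext z
  have e1 : ((prodComparison (G.{u} n) X Y ≫
      (Types.binaryProductIso _ _).hom) z).1 = (G.{u} n).map prod.fst z := by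
    rw [show ((prodComparison (G.{u} n) X Y ≫ (Types.binaryProductIso _ _).hom) z).1
      = ((prodComparison (G.{u} n) X Y ≫ (Types.binaryProductIso _ _).hom) ≫
        TypeCat.ofHom _root_.Prod.fst) z from rfl]
    rw [Category.assoc, Types.binaryProductIso_hom_comp_fst, prodComparison_fst]
  have e2 : ((prodComparison (G.{u} n) X Y ≫
      (Types.binaryProductIso _ _).hom) z).2 = (G.{u} n).map prod.snd z := by
    rw [show ((prodComparison (G.{u} n) X Y ≫ (Types.binaryProductIso _ _).hom) z).2
      = ((prodComparison (G.{u} n) X Y ≫ (Types.binaryProductIso _ _).hom) ≫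
        TypeCat.ofHom _root_.Prod.snd) z from rfl]
    rw [Category.assoc, Types.binaryProductIso_hom_comp_snd, prodComparison_snd]
  exact Prod.ext e1.symm e2.symm

lemma prod_ext {X Y : SimplicialObject Profinite.{u}} {n : SimplexCategoryᵒᵖ}
    {a b : (forget Profinite).obj ((X ⨯ Y).obj n)}
    (h1 : (prod.fst : X ⨯ Y ⟶ X).app n a = (prod.fst : X ⨯ Y ⟶ X).app n b)
    (h2 : (prod.snd : X ⨯ Y ⟶ Y).app n a = (prod.snd : X ⨯ Y ⟶ Y).app n b) : a = b :=
  (prod_bij X Y n).injective (Prod.ext h1 h2)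

lemma prod_mk {X Y : SimplicialObject Profinite.{u}} {n : SimplexCategoryᵒᵖ}
    (a : (forget Profinite).obj (X.obj n)) (b : (forget Profinite).obj (Y.obj n)) :
    ∃ z : (forget Profinite).obj ((X ⨯ Y).obj n),
      (prod.fst : X ⨯ Y ⟶ X).app n z = a ∧ (prod.snd : X ⨯ Y ⟶ Y).app n z = b := by
  obtain ⟨z, hz⟩ := (prod_bij X Y n).surjective (a, b)
  exact ⟨z, congrArg _root_.Prod.fst hz, congrArg _root_.Prod.snd hz⟩

lemma pushout_jointly_surjective {X Y Z : SimplicialObject Profinite.{u}}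
    (f : Z ⟶ X) (g : Z ⟶ Y) (n : SimplexCategoryᵒᵖ)
    (p : (forget Profinite).obj ((pushout f g).obj n)) :
    (∃ a, (pushout.inl f g).app n a = p) ∨ ∃ b, (pushout.inr f g).app n b = p := by
  by_contra hc
  push_neg at hc
  set S : Set ((forget Profinite).obj ((pushout f g).obj n)) :=
    Set.range ((pushout.inl f g).app n) ∪ Set.range ((pushout.inr f g).app n) with hSdef
  have hS : IsClosed S :=
    ((isCompact_range (show Continuous ((pushout.inl f g).app n) from
        (ConcreteCategory.hom ((pushout.inl f g).app n)).continuous)).isClosed).union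
      ((isCompact_range (show Continuous ((pushout.inr f g).app n) from
        (ConcreteCategory.hom ((pushout.inr f g).app n)).continuous)).isClosed)
  have hp : p ∈ Sᶜ := by
    rintro (⟨a, ha⟩ | ⟨b, hb⟩)
    exacts [hc.1 a ha, hc.2 b hb]
  obtain ⟨C, hC, hpC, hCS⟩ :=
    TopologicalSpace.IsTopologicalBasis.exists_subset_of_mem_open
      isTopologicalBasis_isClopen hp hS.isOpen_compl
  let Q : Profinite.{u} := Profinite.of (ULift.{u} Bool)
  let χ : (pushout f g).obj n ⟶ Q :=
    ConcreteCategory.ofHom ⟨fun z => ULift.up (C.boolIndicator z),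
      (Homeomorph.ulift.symm.continuous).comp ((continuous_boolIndicator_iff_isClopen C).mpr hC)⟩
  let ψ : (pushout f g).obj n ⟶ Q :=
    ConcreteCategory.ofHom ⟨fun _ => ULift.up false, continuous_const⟩
  have hL := isColimitOfPreserves (Ev.{u} n) (colimit.isColimit (span f g))
  have hnotl : ∀ a, (pushout.inl f g).app n a ∉ C := fun a hmem => hCS hmem (Or.inl ⟨a, rfl⟩)
  have hnotr : ∀ b, (pushout.inr f g).app n b ∉ C := fun b hmem => hCS hmem (Or.inr ⟨b, rfl⟩)
  have hleft : ((Ev.{u} n).mapCocone (colimit.cocone (span f g))).ι.app WalkingSpan.left ≫ χ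
      = ((Ev.{u} n).mapCocone (colimit.cocone (span f g))).ι.app WalkingSpan.left ≫ ψ := by
    apply ConcreteCategory.hom_ext
    intro a
    show ULift.up (C.boolIndicator ((pushout.inl f g).app n a)) = ULift.up false
    rw [(Set.notMem_iff_boolIndicator _ _).mp (hnotl a)]
  have hright : ((Ev.{u} n).mapCocone (colimit.cocone (span f g))).ι.app WalkingSpan.right ≫ χ
      = ((Ev.{u} n).mapCocone (colimit.cocone (span f g))).ι.app WalkingSpan.right ≫ ψ := by
    apply ConcreteCategory.hom_ext
    intro b
    show ULift.up (C.boolIndicator ((pushout.inr f g).app n b)) = ULift.up false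
    rw [(Set.notMem_iff_boolIndicator _ _).mp (hnotr b)]
  have key : χ = ψ := by
    apply hL.hom_ext
    rintro (_ | _ | _)
    · rw [← Cocone.w ((Ev.{u} n).mapCocone (colimit.cocone (span f g))) WalkingSpan.Hom.fst,
        Category.assoc, Category.assoc, hleft]
    · exact hleft
    · exact hright
  have hval : χ p = ψ p := congrArg (fun m => m p) key
  have hT : C.boolIndicator p = true := (Set.mem_iff_boolIndicator _ _).mp hpC
  have h2 : (ULift.up (C.boolIndicator p) : ULift Bool) = ULift.up false := hval
  rw [hT] at h2
  exact Bool.noConfusion (congrArg ULift.down h2)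

end PPAux

open PPAux

/-- Let `j : A → B` and `i : V → W` be monomorphisms of simplicial profinite
sets. Then the induced pushout-product map `(A × W) ⊔_{A × V} (B × V) → B × W` is a
monomorphism of simplicial profinite sets. -/
theorem pushoutProduct_mono_of_mono
    (A B V W : SimplicialObject Profinite.{u}) (j : A ⟶ B) (i : V ⟶ W)
    [Mono j] [Mono i]
    (pp : pushout (prod.map (𝟙 A) i) (prod.map j (𝟙 V)) ⟶ B ⨯ W)
    (hl : pushout.inl (prod.map (𝟙 A) i) (prod.map j (𝟙 V)) ≫ pp = prod.map j (𝟙 W))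
    (hr : pushout.inr (prod.map (𝟙 A) i) (prod.map j (𝟙 V)) ≫ pp = prod.map (𝟙 B) i) :
    Mono pp := by
  haveI : ∀ n, Mono (pp.app n) := by
    intro n
    apply ConcreteCategory.mono_of_injective
    intro x y hxy
    -- pp on inl elements
    have el : ∀ a, pp.app n ((pushout.inl (prod.map (𝟙 A) i) (prod.map j (𝟙 V))).app n a) = (prod.map j (𝟙 W)).app n a := by
      intro a
      rw [comp_app_apply, hl]
    have er : ∀ b, pp.app n ((pushout.inr (prod.map (𝟙 A) i) (prod.map j (𝟙 V))).app n b) = (prod.map (𝟙 B) i).app n b := by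
      intro b
      rw [comp_app_apply, hr]
    -- the mixed case, as a standalone claim (used twice by symmetry)
    have mixed : ∀ (a : (forget Profinite).obj ((A ⨯ W).obj n))
        (b : (forget Profinite).obj ((B ⨯ V).obj n)),
        (prod.map j (𝟙 W)).app n a = (prod.map (𝟙 B) i).app n b →
        (pushout.inl (prod.map (𝟙 A) i) (prod.map j (𝟙 V))).app n a = (pushout.inr (prod.map (𝟙 A) i) (prod.map j (𝟙 V))).app n b := by
      intro a b hab
      set a₁ := (prod.fst : A ⨯ W ⟶ A).app n a with ha₁
      set a₂ := (prod.snd : A ⨯ W ⟶ W).app n a with ha₂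
      set b₁ := (prod.fst : B ⨯ V ⟶ B).app n b with hb₁
      set b₂ := (prod.snd : B ⨯ V ⟶ V).app n b with hb₂
      have h1 : j.app n a₁ = b₁ := by
        have e := eq_app_apply (prod.map_fst j (𝟙 W)) n a
        have e' := eq_app_apply (prod.map_fst (𝟙 B) i) n b
        rw [hab] at e
        rw [e'] at e
        simpa using e.symm
      have h2 : a₂ = i.app n b₂ := by
        have e := eq_app_apply (prod.map_snd j (𝟙 W)) n a
        have e' := eq_app_apply (prod.map_snd (𝟙 B) i) n b
        rw [hab] at e
        rw [e'] at e
        simpa using e.symm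
      obtain ⟨c, hc1, hc2⟩ := prod_mk a₁ b₂
      have hfc : (prod.map (𝟙 A) i).app n c = a := by
        apply prod_ext
        · have e := eq_app_apply (prod.map_fst (𝟙 A) i) n c
          rw [e, hc1]
          simp [ha₁]
        · have e := eq_app_apply (prod.map_snd (𝟙 A) i) n c
          rw [e, hc2]
          exact h2.symm
      have hgc : (prod.map j (𝟙 V)).app n c = b := by
        apply prod_ext
        · have e := eq_app_apply (prod.map_fst j (𝟙 V)) n c
          rw [e, hc1]
          exact h1
        · have e := eq_app_apply (prod.map_snd j (𝟙 V)) n c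
          rw [e]
          simpa using hc2
      calc (pushout.inl (prod.map (𝟙 A) i) (prod.map j (𝟙 V))).app n a = (pushout.inl (prod.map (𝟙 A) i) (prod.map j (𝟙 V))).app n ((prod.map (𝟙 A) i).app n c) := by rw [hfc]
        _ = (pushout.inr (prod.map (𝟙 A) i) (prod.map j (𝟙 V))).app n ((prod.map j (𝟙 V)).app n c) := eq_app_apply pushout.condition n c
        _ = (pushout.inr (prod.map (𝟙 A) i) (prod.map j (𝟙 V))).app n b := by rw [hgc]
    obtain ⟨a, ha⟩ | ⟨b, hb⟩ := pushout_jointly_surjective (prod.map (𝟙 A) i) (prod.map j (𝟙 V)) n x <;>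
      obtain ⟨a', ha'⟩ | ⟨b', hb'⟩ := pushout_jointly_surjective (prod.map (𝟙 A) i) (prod.map j (𝟙 V)) n y
    · -- inl, inl
      have : (prod.map j (𝟙 W)).app n a = (prod.map j (𝟙 W)).app n a' := by
        rw [← el, ← el, ha, ha', hxy]
      have := app_injective (prod.map j (𝟙 W)) n this
      rw [← ha, ← ha', this]
    · -- inl, inr
      have hab : (prod.map j (𝟙 W)).app n a = (prod.map (𝟙 B) i).app n b' := by
        rw [← el, ← er, ha, hb', hxy]
      rw [← ha, ← hb', mixed a b' hab]
    · -- inr, inl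
      have hab : (prod.map j (𝟙 W)).app n a' = (prod.map (𝟙 B) i).app n b := by
        rw [← el, ← er, ha', hb, hxy]
      rw [← hb, ← ha', mixed a' b hab]
    · -- inr, inr
      have : (prod.map (𝟙 B) i).app n b = (prod.map (𝟙 B) i).app n b' := by
        rw [← er, ← er, hb, hb', hxy]
      have := app_injective (prod.map (𝟙 B) i) n this
      rw [← hb, ← hb', this]
  exact NatTrans.mono_of_mono_app pp
end

section
/- Let I be a small cofiltered category and let X : I → (simplicial profinite sets) be a diagram with limit lim_i X_i (computed levelwise in Profinite). Then the canonical map π₀(lim_i X_i) → lim_i π₀(X_i) is an isomorphism of profinite spaces. -/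
universe u

open CategoryTheory Simplicial Limits Opposite

attribute [local instance] CategoryTheory.ConcreteCategory.instFunLike

/-- The functor `π₀ : sProfinite → Profinite`, sending a simplicial profinite set `X` to the
coequalizer in `Profinite` of the two face maps `d₀, d₁ : X₁ ⇉ X₀`. -/
noncomputable def profinitePi0 : SimplicialObject Profinite.{u} ⥤ Profinite.{u} where
  obj X := coequalizer (X.δ (0 : Fin 2)) (X.δ (1 : Fin 2))
  map {X Y} f :=
    coequalizer.desc
      (f.app (op (SimplexCategory.mk 0)) ≫ coequalizer.π (Y.δ (0 : Fin 2)) (Y.δ (1 : Fin 2)))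
      (by
        have h0 : X.δ (0 : Fin 2) ≫ f.app (op (SimplexCategory.mk 0)) =
            f.app (op (SimplexCategory.mk 1)) ≫ Y.δ (0 : Fin 2) := f.naturality _
        have h1 : X.δ (1 : Fin 2) ≫ f.app (op (SimplexCategory.mk 0)) =
            f.app (op (SimplexCategory.mk 1)) ≫ Y.δ (1 : Fin 2) := f.naturality _
        rw [← Category.assoc, h0, ← Category.assoc, h1, Category.assoc, Category.assoc,
          coequalizer.condition])
  map_id X := by
    apply coequalizer.hom_ext
    simp
  map_comp f g := by
    apply coequalizer.hom_ext
    simp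

lemma pi0_aux_pi_surjective {A B : Profinite.{u}} (f g : A ⟶ B) :
    Function.Surjective (coequalizer.π f g) := by
  rw [← Profinite.epi_iff_surjective]
  infer_instance

lemma pi0_aux_mem_iff {A B : Profinite.{u}} (f g : A ⟶ B) {U : Set B}
    (hU : IsClopen U) (hfg : ⇑f ⁻¹' U = ⇑g ⁻¹' U) {a b : B}
    (h : coequalizer.π f g a = coequalizer.π f g b) : a ∈ U ↔ b ∈ U := by
  classical
  let χ : B ⟶ Profinite.of (ULift.{u} Bool) :=
    ConcreteCategory.ofHom ⟨fun x => ULift.up (U.boolIndicator x),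
      (Homeomorph.ulift.symm.continuous).comp
        ((continuous_boolIndicator_iff_isClopen U).mpr hU)⟩
  have hcoeq : f ≫ χ = g ≫ χ := by
    ext x
    have hx : (f x ∈ U) = (g x ∈ U) := by
      rw [← Set.mem_preimage, ← Set.mem_preimage, hfg]
    show (U.boolIndicator (f x)) = (U.boolIndicator (g x))
    simp [Set.boolIndicator, hx]
  have hfac : χ = coequalizer.π f g ≫ coequalizer.desc χ hcoeq :=
    (coequalizer.π_desc χ hcoeq).symm
  have ha := ConcreteCategory.congr_hom hfac a
  have hb := ConcreteCategory.congr_hom hfac b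
  rw [comp_apply] at ha hb
  rw [h] at ha
  have hab : χ a = χ b := ha.trans hb.symm
  have hbi : U.boolIndicator a = U.boolIndicator b := congrArg ULift.down hab
  constructor
  · intro hmem
    exact (Set.mem_iff_boolIndicator U b).mpr
      (hbi ▸ (Set.mem_iff_boolIndicator U a).mp hmem)
  · intro hmem
    exact (Set.mem_iff_boolIndicator U a).mpr
      (hbi.symm ▸ (Set.mem_iff_boolIndicator U b).mp hmem)

lemma pi0_aux_exists_clopen {A B : Profinite.{u}} (f g : A ⟶ B) {a b : B}
    (h : coequalizer.π f g a ≠ coequalizer.π f g b) :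
    ∃ U : Set B, IsClopen U ∧ ⇑f ⁻¹' U = ⇑g ⁻¹' U ∧ a ∈ U ∧ b ∉ U := by
  obtain ⟨W, hW, hmem, hnot⟩ := exists_isClopen_of_totally_separated h
  refine ⟨⇑(coequalizer.π f g) ⁻¹' W, hW.preimage (ConcreteCategory.hom (coequalizer.π f g)).continuous, ?_, hmem, hnot⟩
  ext x
  have hx := ConcreteCategory.congr_hom (coequalizer.condition f g) x
  rw [comp_apply, comp_apply] at hx
  simp only [Set.mem_preimage, hx]

lemma pi0_aux_sections {I : Type u} [SmallCategory I] [IsCofiltered I]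
    (F : I ⥤ Profinite.{u}) (C : ∀ i, Set (F.obj i))
    (hclosed : ∀ i, IsClosed (C i)) (hne : ∀ i, (C i).Nonempty)
    (hmap : ∀ {i j : I} (φ : i ⟶ j) (x : F.obj i), x ∈ C i → F.map φ x ∈ C j) :
    ∃ u : ∀ i, F.obj i, (∀ {i j : I} (φ : i ⟶ j), F.map φ (u i) = u j) ∧ ∀ i, u i ∈ C i := by
  let G : I ⥤ TopCat.{u} :=
    { obj := fun i => TopCat.of (C i)
      map := fun {i j} φ => TopCat.ofHom ⟨fun x => ⟨F.map φ x.1, hmap φ x.1 x.2⟩,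
        Continuous.subtype_mk ((ConcreteCategory.hom (F.map φ)).continuous.comp continuous_subtype_val) _⟩
      map_id := fun i => by
        ext x
        change F.map (𝟙 i) x.1 = x.1
        simp
      map_comp := fun φ ψ => by
        ext x
        change F.map (φ ≫ ψ) x.1 = F.map ψ (F.map φ x.1)
        simp }
  have h1 : ∀ i, Nonempty (G.obj i) := fun i => (hne i).to_subtype
  have h2 : ∀ i, CompactSpace (G.obj i) := fun i =>
    isCompact_iff_compactSpace.mp ((hclosed i).isCompact)
  have h3 : ∀ i, T2Space (G.obj i) := fun i => inferInstanceAs (T2Space (C i))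
  obtain ⟨u⟩ := TopCat.nonempty_limitCone_of_compact_t2_cofiltered_system G
  exact ⟨fun i => (u.1 i).1, fun {i j} φ => congrArg Subtype.val (u.2 φ), fun i => (u.1 i).2⟩

lemma pi0_aux_ofSections {I : Type u} [SmallCategory I] (F : I ⥤ Profinite.{u})
    {c : Cone F} (hc : IsLimit c) (u : ∀ i, F.obj i)
    (hu : ∀ {i j : I} (φ : i ⟶ j), F.map φ (u i) = u j) :
    ∃ x : c.pt, ∀ i, c.π.app i x = u i := by
  let hc' := isLimitOfPreserves (forget Profinite) hc
  let e := Types.isLimitEquivSections hc'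
  refine ⟨e.symm ⟨u, fun {i j} φ => hu φ⟩, fun i => ?_⟩
  exact Types.isLimitEquivSections_symm_apply hc' _ i

lemma pi0_aux_empty_stage {I : Type u} [SmallCategory I] [IsCofiltered I]
    (F : I ⥤ Profinite.{u}) {c : Cone F} (hc : IsLimit c) (i : I)
    {S : Set (F.obj i)} (hS : IsClosed S) (hempty : ⇑(c.π.app i) ⁻¹' S = ∅) :
    ∃ (j : I) (φ : j ⟶ i), ⇑(F.map φ) ⁻¹' S = ∅ := by
  classical
  by_contra hcon
  push_neg at hcon
  by_cases hK : ∀ j : I, (⋂ (φ : j ⟶ i), ⇑(F.map φ) ⁻¹' S).Nonempty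
  · obtain ⟨u, hu, humem⟩ := pi0_aux_sections F
      (fun j => ⋂ (φ : j ⟶ i), ⇑(F.map φ) ⁻¹' S)
      (fun j => isClosed_iInter fun φ => hS.preimage (ConcreteCategory.hom (F.map φ)).continuous) hK
      (fun {j k} ψ x hx => Set.mem_iInter.mpr fun φ => by
        have h2 := Set.mem_iInter.mp hx (ψ ≫ φ)
        rw [Set.mem_preimage, F.map_comp, comp_apply] at h2
        exact h2)
    obtain ⟨x, hx⟩ := pi0_aux_ofSections F hc u hu
    have hxS : c.π.app i x ∈ S := by
      have h3 := Set.mem_iInter.mp (humem i) (𝟙 i)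
      rw [Set.mem_preimage, F.map_id, id_apply] at h3
      rw [hx i]
      exact h3
    rw [Set.eq_empty_iff_forall_notMem] at hempty
    exact hempty x hxS
  · push_neg at hK
    obtain ⟨j₀, hj₀⟩ := hK
    obtain ⟨t, ht⟩ := IsCompact.elim_finite_subfamily_closed (isCompact_univ)
      (fun φ : (j₀ ⟶ i) => ⇑(F.map φ) ⁻¹' S) (fun φ => hS.preimage (ConcreteCategory.hom (F.map φ)).continuous)
      (by rw [Set.univ_inter]; exact hj₀)
    obtain ⟨S', T, hT⟩ := IsCofiltered.inf_exists ({j₀, i} : Finset I)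
      (t.image fun φ => ⟨j₀, i, by simp, by simp, φ⟩)
    have mj₀ : j₀ ∈ ({j₀, i} : Finset I) := by simp
    have mi : i ∈ ({j₀, i} : Finset I) := by simp
    obtain ⟨x, hx⟩ := hcon S' (T mi)
    have hmem : F.map (T mj₀) x ∈ Set.univ ∩ ⋂ φ ∈ t, ⇑(F.map φ) ⁻¹' S := by
      refine ⟨trivial, Set.mem_iInter₂.mpr fun φ hφ => ?_⟩
      have hcomm : T mj₀ ≫ φ = T mi := hT mj₀ mi (Finset.mem_image_of_mem _ hφ)
      show F.map φ (F.map (T mj₀) x) ∈ S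
      rw [← comp_apply, ← F.map_comp, hcomm]
      exact hx
    rw [ht] at hmem
    exact hmem

lemma profinitePi0_pi_map {A B : SimplicialObject Profinite.{u}} (f : A ⟶ B)
    (x : A.obj (op (SimplexCategory.mk 0))) :
    profinitePi0.map f (coequalizer.π (A.δ (0 : Fin 2)) (A.δ (1 : Fin 2)) x) =
      coequalizer.π (B.δ (0 : Fin 2)) (B.δ (1 : Fin 2))
        (f.app (op (SimplexCategory.mk 0)) x) := by
  have h : coequalizer.π (A.δ (0 : Fin 2)) (A.δ (1 : Fin 2)) ≫ profinitePi0.map f =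
      f.app (op (SimplexCategory.mk 0)) ≫
        coequalizer.π (B.δ (0 : Fin 2)) (B.δ (1 : Fin 2)) :=
    coequalizer.π_desc _ _
  have h2 := ConcreteCategory.congr_hom h x
  change profinitePi0.map f (coequalizer.π (A.δ (0 : Fin 2)) (A.δ (1 : Fin 2)) x) = coequalizer.π (B.δ (0 : Fin 2)) (B.δ (1 : Fin 2)) (f.app (op (SimplexCategory.mk 0)) x) at h2
  exact h2


/-- Evaluation of simplicial profinite sets at `[n]`. -/
noncomputable abbrev pi0AuxEv (n : ℕ) : SimplicialObject Profinite.{u} ⥤ Profinite.{u} :=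
  (CategoryTheory.evaluation SimplexCategoryᵒᵖ Profinite.{u}).obj (op (SimplexCategory.mk n))

/-- The levelwise limit cone. -/
noncomputable abbrev pi0AuxCone (n : ℕ) {I : Type u} [SmallCategory I]
    (X : I ⥤ SimplicialObject Profinite.{u}) : Cone (X ⋙ pi0AuxEv n) :=
  (pi0AuxEv n).mapCone (limit.cone X)

noncomputable def pi0AuxConeIsLimit (n : ℕ) {I : Type u} [SmallCategory I]
    (X : I ⥤ SimplicialObject Profinite.{u}) : IsLimit (pi0AuxCone n X) :=
  haveI : PreservesLimit X (pi0AuxEv n) :=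
    CategoryTheory.Limits.evaluation_preservesLimit
      (J := I) (K := SimplexCategoryᵒᵖ) (C := Profinite.{u}) X (op (SimplexCategory.mk n))
  isLimitOfPreserves _ (limit.isLimit X)

/-- Let `I` be a small cofiltered category and let `X : I → sProfinite` be a
diagram of simplicial profinite sets with limit `lim_i X_i`. Then the canonical map
`π₀(lim_i X_i) → lim_i π₀(X_i)` is an isomorphism of profinite spaces. -/
theorem pi0_cofiltered_limit_comparison_isIso
    (I : Type u) [SmallCategory I] [IsCofiltered I]
    (X : I ⥤ SimplicialObject Profinite.{u}) :
    IsIso (limit.post X profinitePi0) := by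
  -- key computation
  have hpost : ∀ (j : I) (x : (limit X).obj (op (SimplexCategory.mk 0))),
      limit.π (X ⋙ profinitePi0) j
        (limit.post X profinitePi0 (coequalizer.π ((limit X : SimplicialObject Profinite.{u}).δ (0 : Fin 2)) ((limit X : SimplicialObject Profinite.{u}).δ (1 : Fin 2)) x)) =
      coequalizer.π ((X.obj j).δ (0 : Fin 2)) ((X.obj j).δ (1 : Fin 2))
        ((limit.π X j).app (op (SimplexCategory.mk 0)) x) := by
    intro j x
    have h1 : limit.post X profinitePi0 ≫ limit.π (X ⋙ profinitePi0) j =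
        profinitePi0.map (limit.π X j) := limit.post_π X profinitePi0 j
    have h2 := ConcreteCategory.congr_hom h1
      (coequalizer.π ((limit X : SimplicialObject Profinite.{u}).δ (0 : Fin 2)) ((limit X : SimplicialObject Profinite.{u}).δ (1 : Fin 2)) x)
    change limit.π (X ⋙ profinitePi0) j (limit.post X profinitePi0 _) = _ at h2
    rw [h2]
    exact profinitePi0_pi_map (limit.π X j) x
  apply CompHausLike.isIso_of_bijective
  constructor
  · -- injectivity
    intro q q' hqq'
    obtain ⟨a, rfl⟩ := pi0_aux_pi_surjective ((limit X : SimplicialObject Profinite.{u}).δ (0 : Fin 2)) ((limit X : SimplicialObject Profinite.{u}).δ (1 : Fin 2)) q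
    obtain ⟨b, rfl⟩ := pi0_aux_pi_surjective ((limit X : SimplicialObject Profinite.{u}).δ (0 : Fin 2)) ((limit X : SimplicialObject Profinite.{u}).δ (1 : Fin 2)) q'
    by_contra hne
    obtain ⟨U, hU, hU01, haU, hbU⟩ := pi0_aux_exists_clopen _ _ hne
    obtain ⟨i, V, hV, hUV⟩ := Profinite.exists_isClopen_of_cofiltered (pi0AuxCone 0 X) (pi0AuxConeIsLimit 0 X) hU
    have hUV' : U = ⇑((limit.π X i).app (op (SimplexCategory.mk 0))) ⁻¹' V := hUV
    -- naturality of the projections against δ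
    have hnat : ∀ (k : Fin 2) (x : (limit X).obj (op (SimplexCategory.mk 1))),
        (X.obj i).δ k ((limit.π X i).app (op (SimplexCategory.mk 1)) x) = (limit.π X i).app (op (SimplexCategory.mk 0)) ((limit X : SimplicialObject Profinite.{u}).δ k x) := by
      intro k x
      have h := ConcreteCategory.congr_hom
        ((limit.π X i).naturality (SimplexCategory.δ k).op) x
      rw [comp_apply] at h
      exact h.symm
    -- the symmetric difference
    set A0 : Set ((X ⋙ pi0AuxEv 1).obj i) := ⇑((X.obj i).δ (0 : Fin 2)) ⁻¹' V with hA0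
    set A1 : Set ((X ⋙ pi0AuxEv 1).obj i) := ⇑((X.obj i).δ (1 : Fin 2)) ⁻¹' V with hA1
    set S : Set ((X ⋙ pi0AuxEv 1).obj i) := (A0 \ A1) ∪ (A1 \ A0) with hSdef
    have hA0c : IsClopen A0 := hV.preimage (ConcreteCategory.hom ((X.obj i).δ (0 : Fin 2))).continuous
    have hA1c : IsClopen A1 := hV.preimage (ConcreteCategory.hom ((X.obj i).δ (1 : Fin 2))).continuous
    have hSc : IsClosed S := ((hA0c.diff hA1c).union (hA1c.diff hA0c)).isClosed
    have hmemU : ∀ (k : Fin 2) (x : (limit X).obj (op (SimplexCategory.mk 1))),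
        (limit.π X i).app (op (SimplexCategory.mk 1)) x ∈ (⇑((X.obj i).δ k) ⁻¹' V) ↔ (limit X : SimplicialObject Profinite.{u}).δ k x ∈ U := by
      intro k x
      rw [hUV']
      simp only [Set.mem_preimage, hnat k x]
    have hU01' : ∀ x : (limit X).obj (op (SimplexCategory.mk 1)), ((limit X : SimplicialObject Profinite.{u}).δ (0 : Fin 2) x ∈ U ↔ (limit X : SimplicialObject Profinite.{u}).δ (1 : Fin 2) x ∈ U) := by
      intro x
      have := Set.ext_iff.mp hU01 x
      simpa only [Set.mem_preimage] using this
    have hSempty : ⇑((pi0AuxCone 1 X).π.app i) ⁻¹' S = ∅ := by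
      rw [Set.eq_empty_iff_forall_notMem]
      intro x hx
      have hx' : (limit.π X i).app (op (SimplexCategory.mk 1)) x ∈ S := hx
      rcases hx' with ⟨h1, h2⟩ | ⟨h1, h2⟩
      · exact h2 ((hmemU 1 x).mpr ((hU01' x).mp ((hmemU 0 x).mp h1)))
      · exact h2 ((hmemU 0 x).mpr ((hU01' x).mpr ((hmemU 1 x).mp h1)))
    obtain ⟨j, φ, hφ⟩ := pi0_aux_empty_stage (X ⋙ pi0AuxEv 1) (pi0AuxConeIsLimit 1 X) i hSc hSempty
    -- the pulled back clopen
    set V' : Set ((X ⋙ pi0AuxEv 0).obj j) := ⇑((X.map φ).app (op (SimplexCategory.mk 0))) ⁻¹' V with hV'def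
    have hV'c : IsClopen V' := hV.preimage (ConcreteCategory.hom ((X.map φ).app (op (SimplexCategory.mk 0)))).continuous
    have hnatφ : ∀ (k : Fin 2) (x : (X.obj j).obj (op (SimplexCategory.mk 1))),
        (X.map φ).app (op (SimplexCategory.mk 0)) ((X.obj j).δ k x) = (X.obj i).δ k ((X.map φ).app (op (SimplexCategory.mk 1)) x) := by
      intro k x
      have h := ConcreteCategory.congr_hom ((X.map φ).naturality (SimplexCategory.δ k).op) x
      rw [comp_apply] at h
      exact h
    have hV'01 : ⇑((X.obj j).δ (0 : Fin 2)) ⁻¹' V' = ⇑((X.obj j).δ (1 : Fin 2)) ⁻¹' V' := by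
      ext x
      have hxS : (X.map φ).app (op (SimplexCategory.mk 1)) x ∉ S := by
        intro hmem
        rw [Set.eq_empty_iff_forall_notMem] at hφ
        exact hφ x hmem
      simp only [Set.mem_preimage, hV'def, hnatφ]
      simp only [hSdef, Set.mem_union, Set.mem_diff, hA0, hA1, Set.mem_preimage] at hxS
      tauto
    -- equality of classes at stage j
    have hjeq : coequalizer.π ((X.obj j).δ (0 : Fin 2)) ((X.obj j).δ (1 : Fin 2))
          ((limit.π X j).app (op (SimplexCategory.mk 0)) a) =
        coequalizer.π ((X.obj j).δ (0 : Fin 2)) ((X.obj j).δ (1 : Fin 2))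
          ((limit.π X j).app (op (SimplexCategory.mk 0)) b) := by
      rw [← hpost j a, ← hpost j b, hqq']
    have hiff := pi0_aux_mem_iff ((X.obj j).δ (0 : Fin 2)) ((X.obj j).δ (1 : Fin 2))
      hV'c hV'01 hjeq
    -- transfer membership along limit.w
    have hw : ∀ x : (limit X).obj (op (SimplexCategory.mk 0)), (X.map φ).app (op (SimplexCategory.mk 0)) ((limit.π X j).app (op (SimplexCategory.mk 0)) x) =
        (limit.π X i).app (op (SimplexCategory.mk 0)) x := by
      intro x
      have h : (limit.π X j).app (op (SimplexCategory.mk 0)) ≫ (X.map φ).app (op (SimplexCategory.mk 0)) =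
          (limit.π X i).app (op (SimplexCategory.mk 0)) := by
        rw [← NatTrans.comp_app, limit.w X φ]
      have h2 := ConcreteCategory.congr_hom h x
      rw [comp_apply] at h2
      exact h2
    have haV' : (limit.π X j).app (op (SimplexCategory.mk 0)) a ∈ V' := by
      rw [hV'def, Set.mem_preimage, hw a, ← Set.mem_preimage, ← hUV']
      exact haU
    have hbV' := hiff.mp haV'
    rw [hV'def, Set.mem_preimage, hw b, ← Set.mem_preimage, ← hUV'] at hbV'
    exact hbU hbV'
  · -- surjectivity
    intro y
    set s : ∀ j : I, ((X ⋙ profinitePi0).obj j : Type u) :=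
      fun j => limit.π (X ⋙ profinitePi0) j y with hs
    have hscompat : ∀ {j k : I} (φ : j ⟶ k), profinitePi0.map (X.map φ) (s j) = s k := by
      intro j k φ
      have h := ConcreteCategory.congr_hom (limit.w (X ⋙ profinitePi0) φ) y
      rw [comp_apply] at h
      exact h
    obtain ⟨u, hu, humem⟩ := pi0_aux_sections (X ⋙ pi0AuxEv 0)
      (fun j => ⇑(coequalizer.π ((X.obj j).δ (0 : Fin 2)) ((X.obj j).δ (1 : Fin 2))) ⁻¹' {s j})
      (fun j => (isClosed_singleton).preimage
        (ConcreteCategory.hom (coequalizer.π ((X.obj j).δ (0 : Fin 2)) ((X.obj j).δ (1 : Fin 2)))).continuous)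
      (fun j => by
        obtain ⟨x, hx⟩ := pi0_aux_pi_surjective
          ((X.obj j).δ (0 : Fin 2)) ((X.obj j).δ (1 : Fin 2)) (s j)
        exact ⟨x, hx⟩)
      (fun {j k} φ x hx => by
        simp only [Set.mem_preimage, Set.mem_singleton_iff] at hx ⊢
        rw [← hscompat φ, ← hx]
        exact (profinitePi0_pi_map (X.map φ) x).symm)
    obtain ⟨x, hx⟩ := pi0_aux_ofSections (X ⋙ pi0AuxEv 0) (pi0AuxConeIsLimit 0 X) u hu
    refine ⟨coequalizer.π ((limit X : SimplicialObject Profinite.{u}).δ (0 : Fin 2)) ((limit X : SimplicialObject Profinite.{u}).δ (1 : Fin 2)) x, ?_⟩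
    apply Concrete.limit_ext (X ⋙ profinitePi0)
    intro j
    rw [hpost j x]
    have hxj : (limit.π X j).app (op (SimplexCategory.mk 0)) x = u j := hx j
    rw [hxj]
    have := humem j
    simp only [Set.mem_preimage, Set.mem_singleton_iff] at this
    rw [this]
end
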